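/- arXiv:1509.05928 — 5 statements merged into one kernel-verified Lean document; each statement's English description precedes it below -/
import Mathlib

section
/- Let n ≥ 1 and g ∈ L²(ℝⁿ) be measurable. Define the Besov character σ(g) = sup{σ ∈ [0,∞) : sup_{j∈ℤ} 2^{−jσ} a_j(g) < ∞} ∈ [0,+∞] (this supremum set contains 0 since a_j(g) ≤ ‖g‖₂ for all j). If r* ∈ (−n/2, ∞) satisfies 0 < P_{r*}(g)₋ and P_{r*}(g)₊ < ∞ (i.e. the decay character of g exists and equals r*), then σ(g) = r* + n/2. -/
open MeasureTheory Filter Topology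
open scoped ENNReal NNReal

noncomputable section

/-- The quantity `ρ^{-(2r+n)} ∫_{|ξ|≤ρ} |g(ξ)|² dξ`, valued in `[0,∞]`. -/
def decayFun (n : ℕ) (g : EuclideanSpace ℝ (Fin n) → ℂ) (r ρ : ℝ) : ℝ≥0∞ :=
  ENNReal.ofReal (ρ ^ (-(2 * r + (n : ℝ)))) *
    ∫⁻ ξ in {ξ : EuclideanSpace ℝ (Fin n) | ‖ξ‖ ≤ ρ}, ENNReal.ofReal (‖g ξ‖ ^ 2)

/-- Lower decay indicator `P_r(g)₋`. -/
def Pminus (n : ℕ) (g : EuclideanSpace ℝ (Fin n) → ℂ) (r : ℝ) : ℝ≥0∞ :=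
  liminf (fun ρ : ℝ => decayFun n g r ρ) (𝓝[>] (0 : ℝ))

/-- Upper decay indicator `P_r(g)₊`. -/
def Pplus (n : ℕ) (g : EuclideanSpace ℝ (Fin n) → ℂ) (r : ℝ) : ℝ≥0∞ :=
  limsup (fun ρ : ℝ => decayFun n g r ρ) (𝓝[>] (0 : ℝ))

/-- Sharp Littlewood–Paley block: `a_j(g) = (∫_{2^j ≤ |ξ| < 2^{j+1}} |g(ξ)|² dξ)^{1/2}`. -/
def ajBlock (n : ℕ) (g : EuclideanSpace ℝ (Fin n) → ℂ) (j : ℤ) : ℝ≥0∞ :=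
  (∫⁻ ξ in {ξ : EuclideanSpace ℝ (Fin n) |
      (2 : ℝ) ^ (j : ℝ) ≤ ‖ξ‖ ∧ ‖ξ‖ < (2 : ℝ) ^ ((j : ℝ) + 1)},
    ENNReal.ofReal (‖g ξ‖ ^ 2)) ^ (1 / 2 : ℝ)

/-- The strong A-condition with exponent `σ`: the Fourier-side description of `Ȧ^{-σ}_{2,∞}`. -/
def StrongACond (n : ℕ) (g : EuclideanSpace ℝ (Fin n) → ℂ) (σ : ℝ) : Prop :=
  ∃ c C : ℝ, 0 < c ∧ 0 < C ∧ ∃ M : ℕ, 0 < M ∧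
    (∀ j : ℤ, ajBlock n g j ≤ ENNReal.ofReal (C * (2 : ℝ) ^ (σ * (j : ℝ)))) ∧
    (∀ j₀ : ℤ, ∃ j : ℤ, j₀ ≤ j ∧ j < j₀ + M ∧
      ENNReal.ofReal (c * (2 : ℝ) ^ (σ * (j : ℝ))) ≤ ajBlock n g j)

/-- The weak A-condition with exponent `σ`: the Fourier-side description of `𝒜^{-σ}_{2,∞}`. -/
def WeakACond (n : ℕ) (g : EuclideanSpace ℝ (Fin n) → ℂ) (σ : ℝ) : Prop :=
  ∃ c C : ℝ, 0 < c ∧ 0 < C ∧ ∃ jk : ℕ → ℤ,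
    Filter.Tendsto jk Filter.atTop Filter.atBot ∧
    (∃ M : ℕ, ∀ k : ℕ, |jk k - jk (k + 1)| ≤ M) ∧
    (∀ j : ℤ, ajBlock n g j ≤ ENNReal.ofReal (C * (2 : ℝ) ^ (σ * (j : ℝ)))) ∧
    (∀ k : ℕ, ENNReal.ofReal (c * (2 : ℝ) ^ (σ * (jk k : ℝ))) ≤ ajBlock n g (jk k))

/-- The Besov character `σ(g) = sup {σ ≥ 0 : sup_j 2^{-jσ} a_j(g) < ∞}`, valued in `[0,∞]`. -/
def besovChar (n : ℕ) (g : EuclideanSpace ℝ (Fin n) → ℂ) : ℝ≥0∞ :=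
  sSup {x : ℝ≥0∞ | ∃ σ : ℝ, 0 ≤ σ ∧ x = ENNReal.ofReal σ ∧
    ∃ C : ℝ, ∀ j : ℤ, ajBlock n g j ≤ ENNReal.ofReal (C * (2 : ℝ) ^ (σ * (j : ℝ)))}

namespace S14

variable (n : ℕ) (g : EuclideanSpace ℝ (Fin n) → ℂ)

def Fb (ρ : ℝ) : ℝ≥0∞ :=
  ∫⁻ ξ in {ξ : EuclideanSpace ℝ (Fin n) | ‖ξ‖ ≤ ρ}, ENNReal.ofReal (‖g ξ‖ ^ 2)

def Ia (j : ℤ) : ℝ≥0∞ :=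
  ∫⁻ ξ in {ξ : EuclideanSpace ℝ (Fin n) |
      (2 : ℝ) ^ (j : ℝ) ≤ ‖ξ‖ ∧ ‖ξ‖ < (2 : ℝ) ^ ((j : ℝ) + 1)},
    ENNReal.ofReal (‖g ξ‖ ^ 2)

lemma ajBlock_eq (j : ℤ) : ajBlock n g j = (Ia n g j) ^ (1/2 : ℝ) := rfl

lemma Ia_eq_sq (j : ℤ) : Ia n g j = (ajBlock n g j) ^ (2 : ℝ) := by
  rw [ajBlock_eq, ← ENNReal.rpow_mul]
  norm_num

lemma decayFun_eq (r ρ : ℝ) :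
    decayFun n g r ρ = ENNReal.ofReal (ρ ^ (-(2*r + (n:ℝ)))) * Fb n g ρ := rfl

lemma Fb_mono {ρ₁ ρ₂ : ℝ} (h : ρ₁ ≤ ρ₂) : Fb n g ρ₁ ≤ Fb n g ρ₂ :=
  lintegral_mono_set (fun ξ hξ => le_trans hξ h)

lemma Ia_le_Fb (j : ℤ) : Ia n g j ≤ Fb n g ((2:ℝ) ^ ((j:ℝ)+1)) :=
  lintegral_mono_set (fun ξ hξ => le_of_lt hξ.2)

lemma Fb_step (j : ℤ) :
    Fb n g ((2:ℝ) ^ (j:ℝ)) ≤ Fb n g ((2:ℝ) ^ (((j-1:ℤ)):ℝ)) + (Ia n g (j-1) + Ia n g j) := by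
  have hc : ((j - 1 : ℤ) : ℝ) = (j : ℝ) - 1 := by push_cast; ring
  have hsub : {ξ : EuclideanSpace ℝ (Fin n) | ‖ξ‖ ≤ (2:ℝ)^(j:ℝ)} ⊆
      {ξ : EuclideanSpace ℝ (Fin n) | ‖ξ‖ ≤ (2:ℝ)^(((j-1:ℤ)):ℝ)} ∪
      ({ξ : EuclideanSpace ℝ (Fin n) |
          (2:ℝ)^(((j-1:ℤ)):ℝ) ≤ ‖ξ‖ ∧ ‖ξ‖ < (2:ℝ)^((((j-1:ℤ)):ℝ)+1)} ∪
       {ξ : EuclideanSpace ℝ (Fin n) |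
          (2:ℝ)^((j:ℝ)) ≤ ‖ξ‖ ∧ ‖ξ‖ < (2:ℝ)^((j:ℝ)+1)}) := by
    intro ξ hξ
    simp only [Set.mem_setOf_eq, Set.mem_union] at *
    rcases le_or_gt ‖ξ‖ ((2:ℝ)^(((j-1:ℤ)):ℝ)) with h1 | h1
    · exact Or.inl h1
    rcases lt_or_ge ‖ξ‖ ((2:ℝ)^(j:ℝ)) with h2 | h2
    · refine Or.inr (Or.inl ⟨le_of_lt h1, ?_⟩)
      rw [hc]; simpa using h2
    · refine Or.inr (Or.inr ⟨h2, ?_⟩)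
      have : ((2:ℝ)^(j:ℝ)) < (2:ℝ)^((j:ℝ)+1) := by
        apply Real.rpow_lt_rpow_left_iff (x := (2:ℝ)) (by norm_num) |>.mpr
        linarith
      exact lt_of_le_of_lt hξ this
  calc Fb n g ((2:ℝ) ^ (j:ℝ)) ≤ _ := lintegral_mono_set hsub
    _ ≤ _ := by
        refine le_trans (lintegral_union_le _ _ _) ?_
        exact add_le_add le_rfl (lintegral_union_le _ _ _)

lemma Fb_bound_of_Pplus (rstar : ℝ) (hPp : Pplus n g rstar < ⊤) :
    ∃ K ρ₀ : ℝ, 0 < K ∧ 0 < ρ₀ ∧ ∀ ρ : ℝ, 0 < ρ → ρ < ρ₀ →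
      Fb n g ρ ≤ ENNReal.ofReal (K * ρ ^ (2*rstar + (n:ℝ))) := by
  set L := Pplus n g rstar with hL
  have hL1 : L < L + 1 := ENNReal.lt_add_right hPp.ne one_ne_zero
  have hev : ∀ᶠ ρ in 𝓝[>] (0:ℝ), decayFun n g rstar ρ < L + 1 :=
    eventually_lt_of_limsup_lt hL1
  have hL1top : L + 1 ≠ ⊤ := ENNReal.add_ne_top.mpr ⟨hPp.ne, ENNReal.one_ne_top⟩
  set K := (L + 1).toReal with hK
  have hKpos : 0 < K := ENNReal.toReal_pos (by simp) hL1top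
  rw [eventually_iff, mem_nhdsGT_iff_exists_Ioo_subset] at hev
  obtain ⟨u, hu, hsub⟩ := hev
  refine ⟨K, u, hKpos, hu, fun ρ hρ hρu => ?_⟩
  have hd : decayFun n g rstar ρ < L + 1 := hsub ⟨hρ, hρu⟩
  have hd' : decayFun n g rstar ρ ≤ ENNReal.ofReal K := by
    rw [hK, ENNReal.ofReal_toReal hL1top]; exact hd.le
  set α := 2*rstar + (n:ℝ) with hα
  have h1 : ENNReal.ofReal (ρ ^ α) * ENNReal.ofReal (ρ ^ (-α)) = 1 := by
    rw [← ENNReal.ofReal_mul (by positivity), ← Real.rpow_add hρ]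
    norm_num
  calc Fb n g ρ = (ENNReal.ofReal (ρ ^ α) * ENNReal.ofReal (ρ ^ (-α))) * Fb n g ρ := by
        rw [h1, one_mul]
    _ = ENNReal.ofReal (ρ ^ α) * decayFun n g rstar ρ := by
        rw [mul_assoc, decayFun_eq]
    _ ≤ ENNReal.ofReal (ρ ^ α) * ENNReal.ofReal K := mul_le_mul_right hd' _
    _ = ENNReal.ofReal (K * ρ ^ α) := by
        rw [← ENNReal.ofReal_mul (by positivity), mul_comm]

lemma total_lt_top (hg : MemLp g 2 (volume : Measure (EuclideanSpace ℝ (Fin n)))) :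
    (∫⁻ ξ, ENNReal.ofReal (‖g ξ‖ ^ 2)) < ⊤ := by
  have h2 := hg.2
  rw [eLpNorm_eq_lintegral_rpow_enorm_toReal (by norm_num) (by norm_num)] at h2
  have h3 : (∫⁻ ξ, ‖g ξ‖ₑ ^ ((2:ℝ≥0∞).toReal)) < ⊤ := by
    by_contra htop
    push_neg at htop
    rw [top_le_iff] at htop
    rw [htop, ENNReal.top_rpow_of_pos (by norm_num)] at h2
    exact (lt_irrefl _ h2).elim
  have heq : ∀ ξ, ENNReal.ofReal (‖g ξ‖ ^ 2) = ‖g ξ‖ₑ ^ ((2:ℝ≥0∞).toReal) := by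
    intro ξ
    rw [show ((2:ℝ≥0∞).toReal) = (2:ℝ) by simp, ← ofReal_norm_eq_enorm,
      ENNReal.ofReal_rpow_of_nonneg (norm_nonneg _) (by norm_num), Real.rpow_two]
  simp only [heq]
  exact h3

end S14

set_option maxHeartbeats 1000000 in
theorem stmt14 (n : ℕ) (hn : 1 ≤ n) (g : EuclideanSpace ℝ (Fin n) → ℂ)
    (hg_meas : Measurable g) (hg : MemLp g 2 (volume : Measure (EuclideanSpace ℝ (Fin n))))
    (rstar : ℝ) (hlow : -(n : ℝ) / 2 < rstar)
    (hPm : 0 < Pminus n g rstar) (hPp : Pplus n g rstar < ⊤) :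
    besovChar n g = ENNReal.ofReal (rstar + (n : ℝ) / 2) := by
  have h2pos : (0:ℝ) < 2 := by norm_num
  set α : ℝ := 2*rstar + (n:ℝ) with hα
  have hαpos : 0 < α := by simp only [hα]; linarith
  set σ : ℝ := rstar + (n:ℝ)/2 with hσdef
  have hσpos : 0 < σ := by simp only [hσdef]; linarith
  have hα2σ : α = 2*σ := by simp only [hα, hσdef]; ring
  obtain ⟨K, ρ₀, hKpos, hρ₀pos, hFb⟩ := S14.Fb_bound_of_Pplus n g rstar hPp
  set S := ∫⁻ ξ, ENNReal.ofReal (‖g ξ‖^2) with hSdef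
  have hStop : S ≠ ⊤ := (S14.total_lt_top n g hg).ne
  -- membership of σ
  have hmem : ENNReal.ofReal σ ∈ {x : ℝ≥0∞ | ∃ σ' : ℝ, 0 ≤ σ' ∧ x = ENNReal.ofReal σ' ∧
      ∃ C : ℝ, ∀ j : ℤ, ajBlock n g j ≤ ENNReal.ofReal (C * (2 : ℝ) ^ (σ' * (j : ℝ)))} := by
    obtain ⟨m₁, hm₁⟩ := exists_pow_lt_of_lt_one (by linarith : (0:ℝ) < ρ₀/2)
      (by norm_num : (1/2:ℝ) < 1)
    set j₁ : ℤ := -((m₁:ℤ)+1) with hj₁def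
    have hj₁ : (2:ℝ)^((j₁:ℝ)+1) < ρ₀ := by
      have he : ((j₁:ℝ)+1) = -(m₁:ℝ) := by rw [hj₁def]; push_cast; ring
      rw [he, Real.rpow_neg h2pos.le, Real.rpow_natCast]
      calc ((2:ℝ)^m₁)⁻¹ = (1/2:ℝ)^m₁ := by rw [div_pow, one_pow, inv_eq_one_div]
        _ < ρ₀/2 := hm₁
        _ < ρ₀ := by linarith
    set Ca := (K * (2:ℝ)^α) ^ (1/2:ℝ) with hCadef
    set Cb := S.toReal ^ (1/2:ℝ) * (2:ℝ)^(-(σ * (j₁:ℝ))) with hCbdef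
    have hCa0 : 0 ≤ Ca := by rw [hCadef]; positivity
    have hCb0 : 0 ≤ Cb := by
      rw [hCbdef]
      have := ENNReal.toReal_nonneg (a := S)
      positivity
    refine ⟨σ, hσpos.le, rfl, Ca + Cb, fun j => ?_⟩
    rcases le_or_gt j j₁ with hj | hj
    · have hjle : (2:ℝ)^((j:ℝ)+1) ≤ (2:ℝ)^((j₁:ℝ)+1) := by
        apply (Real.rpow_le_rpow_left_iff (by norm_num : (1:ℝ) < 2)).mpr
        have : (j:ℝ) ≤ (j₁:ℝ) := by exact_mod_cast hj
        linarith
      have hρ : (2:ℝ)^((j:ℝ)+1) < ρ₀ := lt_of_le_of_lt hjle hj₁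
      have h1 : S14.Ia n g j ≤ ENNReal.ofReal (K * ((2:ℝ)^((j:ℝ)+1))^α) :=
        (S14.Ia_le_Fb n g j).trans (hFb _ (Real.rpow_pos_of_pos h2pos _) hρ)
      have h2 : ajBlock n g j ≤ (ENNReal.ofReal (K * ((2:ℝ)^((j:ℝ)+1))^α)) ^ (1/2:ℝ) := by
        rw [S14.ajBlock_eq]; exact ENNReal.rpow_le_rpow h1 (by norm_num)
      refine h2.trans ?_
      rw [ENNReal.ofReal_rpow_of_nonneg (by positivity) (by norm_num)]
      apply ENNReal.ofReal_le_ofReal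
      have hid : (K * ((2:ℝ)^((j:ℝ)+1))^α)^(1/2:ℝ) = Ca * (2:ℝ)^(σ * (j:ℝ)) := by
        rw [← Real.rpow_mul h2pos.le, Real.mul_rpow hKpos.le (by positivity),
          ← Real.rpow_mul h2pos.le, hCadef, Real.mul_rpow hKpos.le (by positivity),
          ← Real.rpow_mul h2pos.le,
          show (2:ℝ)^(((j:ℝ)+1)*α*(1/2:ℝ)) = (2:ℝ)^(α*(1/2:ℝ)) * (2:ℝ)^(σ*(j:ℝ)) from by
            rw [← Real.rpow_add h2pos]; congr 1; rw [hα2σ]; ring]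
        ring
      rw [hid]
      have hrp : (0:ℝ) < (2:ℝ)^(σ * (j:ℝ)) := Real.rpow_pos_of_pos h2pos _
      nlinarith
    · have h1 : S14.Ia n g j ≤ S := by
        refine le_trans (lintegral_mono_set (Set.subset_univ _)) ?_
        rw [Measure.restrict_univ]
      have h2 : ajBlock n g j ≤ ENNReal.ofReal (S.toReal ^ (1/2:ℝ)) := by
        rw [S14.ajBlock_eq]
        calc (S14.Ia n g j) ^ (1/2:ℝ) ≤ S ^ (1/2:ℝ) := ENNReal.rpow_le_rpow h1 (by norm_num)
          _ = (ENNReal.ofReal S.toReal) ^ (1/2:ℝ) := by rw [ENNReal.ofReal_toReal hStop]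
          _ = ENNReal.ofReal (S.toReal ^ (1/2:ℝ)) :=
              ENNReal.ofReal_rpow_of_nonneg ENNReal.toReal_nonneg (by norm_num)
      refine h2.trans (ENNReal.ofReal_le_ofReal ?_)
      have hone : (1:ℝ) ≤ (2:ℝ)^(-(σ * (j₁:ℝ))) * (2:ℝ)^(σ * (j:ℝ)) := by
        rw [← Real.rpow_add h2pos]
        have h0 : (0:ℝ) ≤ -(σ * (j₁:ℝ)) + σ * (j:ℝ) := by
          have : (j₁:ℝ) ≤ (j:ℝ) := by exact_mod_cast hj.le
          nlinarith
        calc (1:ℝ) = (2:ℝ)^(0:ℝ) := (Real.rpow_zero 2).symm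
          _ ≤ _ := (Real.rpow_le_rpow_left_iff (by norm_num : (1:ℝ) < 2)).mpr h0
      have hS12 : 0 ≤ S.toReal ^ (1/2:ℝ) := by positivity
      have hrp : (0:ℝ) < (2:ℝ)^(σ * (j:ℝ)) := Real.rpow_pos_of_pos h2pos _
      calc S.toReal ^ (1/2:ℝ) = S.toReal ^ (1/2:ℝ) * 1 := (mul_one _).symm
        _ ≤ S.toReal ^ (1/2:ℝ) * ((2:ℝ)^(-(σ * (j₁:ℝ))) * (2:ℝ)^(σ * (j:ℝ))) :=
            mul_le_mul_of_nonneg_left hone hS12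
        _ = Cb * (2:ℝ)^(σ * (j:ℝ)) := by rw [hCbdef]; ring
        _ ≤ (Ca + Cb) * (2:ℝ)^(σ * (j:ℝ)) := by nlinarith
  -- upper bound
  have hupper : ∀ x ∈ {x : ℝ≥0∞ | ∃ σ' : ℝ, 0 ≤ σ' ∧ x = ENNReal.ofReal σ' ∧
      ∃ C : ℝ, ∀ j : ℤ, ajBlock n g j ≤ ENNReal.ofReal (C * (2 : ℝ) ^ (σ' * (j : ℝ)))},
      x ≤ ENNReal.ofReal σ := by
    rintro x ⟨σ'', hσ''0, rfl, C, hC⟩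
    rcases le_or_gt σ'' σ with hle | hgt
    · exact ENNReal.ofReal_le_ofReal hle
    exfalso
    set C' := max C 1 with hC'def
    have hC'pos : (0:ℝ) < C' := lt_of_lt_of_le one_pos (le_max_right _ _)
    have hC' : ∀ j : ℤ, ajBlock n g j ≤ ENNReal.ofReal (C' * (2:ℝ)^(σ''*(j:ℝ))) := by
      intro j
      refine (hC j).trans (ENNReal.ofReal_le_ofReal ?_)
      exact mul_le_mul_of_nonneg_right (le_max_left _ _) (Real.rpow_pos_of_pos h2pos _).le
    have hIa : ∀ j : ℤ, S14.Ia n g j ≤ ENNReal.ofReal (C'^2 * (2:ℝ)^(2*σ''*(j:ℝ))) := by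
      intro j
      rw [S14.Ia_eq_sq]
      calc (ajBlock n g j)^(2:ℝ) ≤ (ENNReal.ofReal (C' * (2:ℝ)^(σ''*(j:ℝ))))^(2:ℝ) :=
            ENNReal.rpow_le_rpow (hC' j) (by norm_num)
        _ = ENNReal.ofReal ((C' * (2:ℝ)^(σ''*(j:ℝ)))^(2:ℝ)) :=
            ENNReal.ofReal_rpow_of_nonneg (by positivity) (by norm_num)
        _ = ENNReal.ofReal (C'^2 * (2:ℝ)^(2*σ''*(j:ℝ))) := by
            rw [Real.mul_rpow hC'pos.le (Real.rpow_pos_of_pos h2pos _).le,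
              ← Real.rpow_mul h2pos.le, Real.rpow_two,
              show σ''*(j:ℝ)*2 = 2*σ''*(j:ℝ) from by ring]
    set t := (2:ℝ)^(-(2*σ'')) with htdef
    have ht0 : 0 < t := Real.rpow_pos_of_pos h2pos _
    have hσ''pos : 0 < σ'' := lt_trans hσpos hgt
    have ht1 : t < 1 := by
      rw [htdef]
      exact Real.rpow_lt_one_of_one_lt_of_neg (by norm_num) (by linarith)
    set D := C'^2 * (1+t)/(1-t) with hDdef
    have hDpos : 0 < D := by
      apply div_pos (by nlinarith) (by linarith)
    have hDid : D * t + (C'^2 * t + C'^2) = D := by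
      have h1t : (1:ℝ) - t ≠ 0 := by linarith
      have h : D * (1 - t) = C'^2 * (1+t) := by
        rw [hDdef]; exact div_mul_cancel₀ _ h1t
      nlinarith [h]
    have hq : ∀ k:ℤ, (2:ℝ)^(2*σ''*(((k-1:ℤ)):ℝ)) = (2:ℝ)^(2*σ''*(k:ℝ)) * t := by
      intro k
      rw [htdef, ← Real.rpow_add h2pos]
      congr 1
      push_cast; ring
    have key : ∀ m : ℕ, ∀ k : ℤ, S14.Fb n g ((2:ℝ)^((k:ℝ))) ≤
        S14.Fb n g ((2:ℝ)^(((k - (m:ℤ)):ℤ):ℝ)) + ENNReal.ofReal (D * (2:ℝ)^(2*σ''*(k:ℝ))) := by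
      intro m
      induction m with
      | zero =>
          intro k
          rw [show (k - ((0:ℕ):ℤ) : ℤ) = k from by simp]
          exact le_self_add
      | succ m ih =>
          intro k
          calc S14.Fb n g ((2:ℝ)^((k:ℝ)))
              ≤ S14.Fb n g ((2:ℝ)^(((k-1:ℤ)):ℝ)) + (S14.Ia n g (k-1) + S14.Ia n g k) :=
                S14.Fb_step n g k
            _ ≤ (S14.Fb n g ((2:ℝ)^(((k-1 - (m:ℤ):ℤ)):ℝ))
                  + ENNReal.ofReal (D * (2:ℝ)^(2*σ''*(((k-1:ℤ)):ℝ))))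
                + (ENNReal.ofReal (C'^2 * (2:ℝ)^(2*σ''*(((k-1:ℤ)):ℝ)))
                  + ENNReal.ofReal (C'^2 * (2:ℝ)^(2*σ''*(k:ℝ)))) :=
                add_le_add (ih (k-1)) (add_le_add (hIa (k-1)) (hIa k))
            _ = S14.Fb n g ((2:ℝ)^(((k - ((m+1:ℕ):ℤ)):ℤ):ℝ))
                + ENNReal.ofReal (D * (2:ℝ)^(2*σ''*(k:ℝ))) := by
                rw [show (k-1-(m:ℤ) : ℤ) = k - ((m+1:ℕ):ℤ) from by push_cast; ring]
                rw [add_assoc]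
                congr 1
                rw [← ENNReal.ofReal_add (by positivity) (by positivity),
                  ← ENNReal.ofReal_add (by positivity) (by positivity)]
                congr 1
                rw [hq k]
                linear_combination (2:ℝ)^(2*σ''*(k:ℝ)) * hDid
    have hFk : ∀ k : ℤ, S14.Fb n g ((2:ℝ)^((k:ℝ))) ≤
        ENNReal.ofReal (D * (2:ℝ)^(2*σ''*(k:ℝ))) := by
      intro k
      have htend0 : Tendsto (fun m:ℕ => (2:ℝ)^(((k - (m:ℤ)):ℤ):ℝ)) atTop (𝓝 0) := by
        have heq : ∀ m:ℕ, (2:ℝ)^(((k - (m:ℤ)):ℤ):ℝ) = (2:ℝ)^((k:ℝ)) * (1/2:ℝ)^m := by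
          intro m
          rw [show (((k - (m:ℤ)):ℤ):ℝ) = (k:ℝ) + (-(m:ℝ)) from by push_cast; ring,
            Real.rpow_add h2pos, Real.rpow_neg h2pos.le, Real.rpow_natCast]
          rw [div_pow, one_pow, inv_eq_one_div]
        simp only [heq]
        rw [show (0:ℝ) = (2:ℝ)^((k:ℝ)) * 0 from (mul_zero _).symm]
        exact (tendsto_pow_atTop_nhds_zero_of_lt_one (by norm_num) (by norm_num)).const_mul _
      have hev : ∀ᶠ m:ℕ in atTop, S14.Fb n g ((2:ℝ)^((k:ℝ))) ≤
          ENNReal.ofReal (K * ((2:ℝ)^(((k - (m:ℤ)):ℤ):ℝ))^α)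
            + ENNReal.ofReal (D * (2:ℝ)^(2*σ''*(k:ℝ))) := by
        filter_upwards [htend0.eventually_lt_const hρ₀pos] with m hm
        exact (key m k).trans
          (add_le_add_left (hFb _ (Real.rpow_pos_of_pos h2pos _) hm) _)
      have htendR : Tendsto (fun m:ℕ => ENNReal.ofReal (K * ((2:ℝ)^(((k - (m:ℤ)):ℤ):ℝ))^α)
            + ENNReal.ofReal (D * (2:ℝ)^(2*σ''*(k:ℝ)))) atTop
          (𝓝 (ENNReal.ofReal (D * (2:ℝ)^(2*σ''*(k:ℝ))))) := by
        have h1 : Tendsto (fun m:ℕ => K * ((2:ℝ)^(((k - (m:ℤ)):ℤ):ℝ))^α) atTop (𝓝 0) := by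
          have hc : ContinuousAt (fun ρ:ℝ => K * ρ^α) 0 :=
            continuousAt_const.mul (Real.continuousAt_rpow_const 0 α (Or.inr hαpos.le))
          have h2 := hc.tendsto.comp htend0
          simpa [Function.comp_def, Real.zero_rpow hαpos.ne'] using h2
        have h3 := ENNReal.tendsto_ofReal h1
        have h4 := h3.add (tendsto_const_nhds
          (x := ENNReal.ofReal (D * (2:ℝ)^(2*σ''*(k:ℝ)))) (f := atTop))
        simpa using h4
      exact ge_of_tendsto htendR hev
    -- contradiction with liminf
    set L := Pminus n g rstar with hLdef
    have hmin0 : min L 1 ≠ 0 := by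
      simp only [ne_eq, min_eq_iff, not_or]
      constructor
      · rintro ⟨h1, -⟩; exact hPm.ne' h1
      · rintro ⟨h1, -⟩; exact one_ne_zero h1
    have hmintop : min L 1 ≠ ⊤ := ne_top_of_le_ne_top ENNReal.one_ne_top (min_le_right _ _)
    set c0 := min L 1 / 2 with hc0def
    have hc0pos : 0 < c0 := ENNReal.half_pos hmin0
    have hc0lt : c0 < L :=
      lt_of_lt_of_le (ENNReal.half_lt_self hmin0 hmintop) (min_le_left _ _)
    rw [hLdef, Pminus] at hc0lt
    have hevL : ∀ᶠ ρ in 𝓝[>] (0:ℝ), c0 < decayFun n g rstar ρ :=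
      eventually_lt_of_lt_liminf hc0lt
    have hseq : Tendsto (fun m:ℕ => (2:ℝ)^((((-(m:ℤ)):ℤ)):ℝ)) atTop (𝓝[>] 0) := by
      apply tendsto_nhdsWithin_of_tendsto_nhds_of_eventually_within
      · have heq : ∀ m:ℕ, (2:ℝ)^((((-(m:ℤ)):ℤ)):ℝ) = (1/2:ℝ)^m := by
          intro m
          rw [show ((((-(m:ℤ)):ℤ)):ℝ) = -(m:ℝ) from by push_cast; ring,
            Real.rpow_neg h2pos.le, Real.rpow_natCast, div_pow, one_pow, inv_eq_one_div]
        simp only [heq]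
        exact tendsto_pow_atTop_nhds_zero_of_lt_one (by norm_num) (by norm_num)
      · exact Eventually.of_forall fun m => Real.rpow_pos_of_pos h2pos _
    have hev2 : ∀ᶠ m:ℕ in atTop, c0 < decayFun n g rstar ((2:ℝ)^((((-(m:ℤ)):ℤ)):ℝ)) :=
      hseq.eventually hevL
    have hdec : ∀ m:ℕ, decayFun n g rstar ((2:ℝ)^((((-(m:ℤ)):ℤ)):ℝ)) ≤
        ENNReal.ofReal (D * ((2:ℝ)^(α - 2*σ''))^m) := by
      intro m
      rw [S14.decayFun_eq, ← hα]
      calc ENNReal.ofReal (((2:ℝ)^((((-(m:ℤ)):ℤ)):ℝ)) ^ (-α)) * S14.Fb n g ((2:ℝ)^((((-(m:ℤ)):ℤ)):ℝ))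
          ≤ ENNReal.ofReal (((2:ℝ)^((((-(m:ℤ)):ℤ)):ℝ)) ^ (-α))
            * ENNReal.ofReal (D * (2:ℝ)^(2*σ''*((((-(m:ℤ)):ℤ)):ℝ))) :=
            mul_le_mul_right (hFk _) _
        _ = ENNReal.ofReal (D * ((2:ℝ)^(α - 2*σ''))^m) := by
            rw [← ENNReal.ofReal_mul (by positivity)]
            congr 1
            rw [← Real.rpow_mul h2pos.le, ← Real.rpow_natCast ((2:ℝ)^(α-2*σ'')) m,
              ← Real.rpow_mul h2pos.le, mul_left_comm, ← Real.rpow_add h2pos]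
            congr 1
            push_cast; ring
    have htend3 : Tendsto (fun m:ℕ => ENNReal.ofReal (D * ((2:ℝ)^(α-2*σ''))^m)) atTop (𝓝 0) := by
      have hs1 : (2:ℝ)^(α-2*σ'') < 1 :=
        Real.rpow_lt_one_of_one_lt_of_neg (by norm_num) (by rw [hα2σ]; linarith)
      have h5 := (tendsto_pow_atTop_nhds_zero_of_lt_one
        (Real.rpow_pos_of_pos h2pos (α-2*σ'')).le hs1).const_mul D
      have h6 := ENNReal.tendsto_ofReal h5
      simpa using h6
    have hfin : c0 ≤ 0 := ge_of_tendsto htend3 (hev2.mono fun m hm => hm.le.trans (hdec m))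
    exact hc0pos.not_ge hfin
  rw [besovChar]
  exact le_antisymm (sSup_le hupper) (le_sSup hmem)
end
end

section
/- Let n ≥ 1, s ≥ 0, and let g ∈ L²(ℝⁿ) be measurable such that h(ξ) := |ξ|^s g(ξ) also belongs to L²(ℝⁿ) (i.e. the initial datum with Fourier transform g lies in the Sobolev space H^s). If r* ∈ (−n/2, ∞) satisfies 0 < P_{r*}(g)₋ and P_{r*}(g)₊ < ∞, then 0 < P_{r*+s}(h)₋ and P_{r*+s}(h)₊ < ∞. In other words, if the decay character of u₀ exists and equals r*, then the decay character of Λ^s u₀ (where Λ = √(−Δ)) exists and equals r* + s. -/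
open MeasureTheory Filter Topology
open scoped ENNReal NNReal

noncomputable section

lemma ofReal_rpow_mul_ofReal_rpow {x : ℝ} (hx : 0 < x) (a b : ℝ) :
    ENNReal.ofReal (x ^ a) * ENNReal.ofReal (x ^ b) = ENNReal.ofReal (x ^ (a + b)) := by
  rw [← ENNReal.ofReal_mul (Real.rpow_nonneg hx.le a), ← Real.rpow_add hx]

lemma sq_norm_mul_aux (n : ℕ) (s : ℝ) (g : EuclideanSpace ℝ (Fin n) → ℂ)
    (ξ : EuclideanSpace ℝ (Fin n)) :
    ENNReal.ofReal (‖((‖ξ‖ ^ s : ℝ) : ℂ) * g ξ‖ ^ 2)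
      = ENNReal.ofReal ((‖ξ‖ ^ s) ^ 2) * ENNReal.ofReal (‖g ξ‖ ^ 2) := by
  rw [norm_mul, Complex.norm_real,
    Real.norm_of_nonneg (Real.rpow_nonneg (norm_nonneg ξ) s), mul_pow,
    ENNReal.ofReal_mul (by positivity)]

lemma sq_rpow_eq (x s : ℝ) (hx : 0 ≤ x) : (x ^ s) ^ (2 : ℕ) = x ^ (s * 2) := by
  rw [← Real.rpow_natCast (x ^ s) 2, ← Real.rpow_mul hx]
  norm_num

lemma decay_upper (n : ℕ) (s : ℝ) (hs : 0 ≤ s) (g : EuclideanSpace ℝ (Fin n) → ℂ)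
    (r : ℝ) {ρ : ℝ} (hρ : 0 < ρ) :
    decayFun n (fun ξ => ((‖ξ‖ ^ s : ℝ) : ℂ) * g ξ) (r + s) ρ ≤ decayFun n g r ρ := by
  have hmeas : MeasurableSet {ξ : EuclideanSpace ℝ (Fin n) | ‖ξ‖ ≤ ρ} :=
    measurableSet_le measurable_norm measurable_const
  unfold decayFun
  have h1 : (∫⁻ ξ in {ξ : EuclideanSpace ℝ (Fin n) | ‖ξ‖ ≤ ρ},
        ENNReal.ofReal (‖((‖ξ‖ ^ s : ℝ) : ℂ) * g ξ‖ ^ 2))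
      ≤ ENNReal.ofReal ((ρ ^ s) ^ 2) *
        ∫⁻ ξ in {ξ : EuclideanSpace ℝ (Fin n) | ‖ξ‖ ≤ ρ}, ENNReal.ofReal (‖g ξ‖ ^ 2) := by
    rw [← lintegral_const_mul' _ _ ENNReal.ofReal_ne_top]
    refine setLIntegral_mono' hmeas fun ξ hξ => ?_
    rw [sq_norm_mul_aux]
    refine mul_le_mul_left (ENNReal.ofReal_le_ofReal ?_) _
    exact pow_le_pow_left₀ (Real.rpow_nonneg (norm_nonneg ξ) s)
      (Real.rpow_le_rpow (norm_nonneg ξ) hξ hs) 2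
  calc ENNReal.ofReal (ρ ^ (-(2 * (r + s) + (n : ℝ)))) *
        ∫⁻ ξ in {ξ : EuclideanSpace ℝ (Fin n) | ‖ξ‖ ≤ ρ},
          ENNReal.ofReal (‖((‖ξ‖ ^ s : ℝ) : ℂ) * g ξ‖ ^ 2)
      ≤ ENNReal.ofReal (ρ ^ (-(2 * (r + s) + (n : ℝ)))) * (ENNReal.ofReal ((ρ ^ s) ^ 2) *
        ∫⁻ ξ in {ξ : EuclideanSpace ℝ (Fin n) | ‖ξ‖ ≤ ρ}, ENNReal.ofReal (‖g ξ‖ ^ 2)) :=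
        mul_le_mul_right h1 _
    _ = ENNReal.ofReal (ρ ^ (-(2 * r + (n : ℝ)))) *
        ∫⁻ ξ in {ξ : EuclideanSpace ℝ (Fin n) | ‖ξ‖ ≤ ρ}, ENNReal.ofReal (‖g ξ‖ ^ 2) := by
        rw [← mul_assoc, sq_rpow_eq ρ s hρ.le, ofReal_rpow_mul_ofReal_rpow hρ,
          show -(2 * (r + s) + (n : ℝ)) + s * 2 = -(2 * r + (n : ℝ)) by ring]

lemma decay_lower (n : ℕ) (s : ℝ) (hs : 0 ≤ s) (g : EuclideanSpace ℝ (Fin n) → ℂ)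
    (r : ℝ) {ρ θ : ℝ} (hρ : 0 < ρ) (hθ : 0 < θ) :
    ENNReal.ofReal (θ ^ (s * 2)) *
        (decayFun n g r ρ - ENNReal.ofReal (θ ^ (2 * r + (n : ℝ))) * decayFun n g r (θ * ρ))
      ≤ decayFun n (fun ξ => ((‖ξ‖ ^ s : ℝ) : ℂ) * g ξ) (r + s) ρ := by
  have hθρ : 0 < θ * ρ := mul_pos hθ hρ
  set B : ℝ → Set (EuclideanSpace ℝ (Fin n)) := fun t => {ξ | ‖ξ‖ ≤ t} with hB
  set G : EuclideanSpace ℝ (Fin n) → ℝ≥0∞ := fun ξ => ENNReal.ofReal (‖g ξ‖ ^ 2) with hG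
  set S : Set (EuclideanSpace ℝ (Fin n)) := B ρ \ B (θ * ρ) with hS
  have hSmeas : MeasurableSet S :=
    (measurableSet_le measurable_norm measurable_const).diff
      (measurableSet_le measurable_norm measurable_const)
  set I : ℝ → ℝ≥0∞ := fun t => ∫⁻ ξ in B t, G ξ with hI
  -- step B : I ρ - I (θρ) ≤ ∫_S G
  have hsub : I ρ - I (θ * ρ) ≤ ∫⁻ ξ in S, G ξ := by
    rw [tsub_le_iff_right]
    calc I ρ ≤ ∫⁻ ξ in B (θ * ρ) ∪ S, G ξ := by
          refine lintegral_mono_set fun ξ hξ => ?_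
          by_cases h : ξ ∈ B (θ * ρ)
          · exact Or.inl h
          · exact Or.inr ⟨hξ, h⟩
      _ ≤ (∫⁻ ξ in B (θ * ρ), G ξ) + ∫⁻ ξ in S, G ξ := lintegral_union_le _ _ _
      _ = (∫⁻ ξ in S, G ξ) + I (θ * ρ) := add_comm _ _
  -- step A : annulus lower bound for J
  have hann : ENNReal.ofReal (((θ * ρ) ^ s) ^ 2) * ∫⁻ ξ in S, G ξ
      ≤ ∫⁻ ξ in B ρ, ENNReal.ofReal (‖((‖ξ‖ ^ s : ℝ) : ℂ) * g ξ‖ ^ 2) := by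
    rw [← lintegral_const_mul' _ _ ENNReal.ofReal_ne_top]
    calc (∫⁻ ξ in S, ENNReal.ofReal (((θ * ρ) ^ s) ^ 2) * G ξ)
        ≤ ∫⁻ ξ in S, ENNReal.ofReal (‖((‖ξ‖ ^ s : ℝ) : ℂ) * g ξ‖ ^ 2) := by
          refine setLIntegral_mono' hSmeas fun ξ hξ => ?_
          rw [sq_norm_mul_aux]
          refine mul_le_mul_left (ENNReal.ofReal_le_ofReal ?_) _
          have hle : θ * ρ ≤ ‖ξ‖ := le_of_lt (lt_of_not_ge hξ.2)
          exact pow_le_pow_left₀ (Real.rpow_nonneg hθρ.le s)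
            (Real.rpow_le_rpow hθρ.le hle hs) 2
      _ ≤ ∫⁻ ξ in B ρ, ENNReal.ofReal (‖((‖ξ‖ ^ s : ℝ) : ℂ) * g ξ‖ ^ 2) :=
          lintegral_mono_set Set.diff_subset
  -- combine
  have key : ENNReal.ofReal (ρ ^ (-(2 * (r + s) + (n : ℝ)))) *
      (ENNReal.ofReal (((θ * ρ) ^ s) ^ 2) * (I ρ - I (θ * ρ)))
      ≤ decayFun n (fun ξ => ((‖ξ‖ ^ s : ℝ) : ℂ) * g ξ) (r + s) ρ := by
    refine mul_le_mul_right ?_ _ |>.trans (mul_le_mul_right hann _)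
    exact mul_le_mul_right hsub _
  have hFρ : decayFun n g r ρ = ENNReal.ofReal (ρ ^ (-(2 * r + (n : ℝ)))) * I ρ := rfl
  have hFθ : decayFun n g r (θ * ρ)
      = ENNReal.ofReal ((θ * ρ) ^ (-(2 * r + (n : ℝ)))) * I (θ * ρ) := rfl
  have hcK : ENNReal.ofReal (θ ^ (2 * r + (n : ℝ))) *
      ENNReal.ofReal ((θ * ρ) ^ (-(2 * r + (n : ℝ))))
      = ENNReal.ofReal (ρ ^ (-(2 * r + (n : ℝ)))) := by
    rw [Real.mul_rpow hθ.le hρ.le, ENNReal.ofReal_mul (Real.rpow_nonneg hθ.le _), ← mul_assoc,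
      ofReal_rpow_mul_ofReal_rpow hθ,
      show (2 * r + (n : ℝ)) + -(2 * r + (n : ℝ)) = 0 by ring, Real.rpow_zero,
      ENNReal.ofReal_one, one_mul]
  have hK2 : ENNReal.ofReal (ρ ^ (-(2 * (r + s) + (n : ℝ)))) *
      ENNReal.ofReal ((θ * ρ) ^ (s * 2))
      = ENNReal.ofReal (θ ^ (s * 2)) * ENNReal.ofReal (ρ ^ (-(2 * r + (n : ℝ)))) := by
    rw [Real.mul_rpow hθ.le hρ.le, ENNReal.ofReal_mul (Real.rpow_nonneg hθ.le _),
      mul_left_comm, ofReal_rpow_mul_ofReal_rpow hρ,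
      show -(2 * (r + s) + (n : ℝ)) + s * 2 = -(2 * r + (n : ℝ)) by ring]
  calc ENNReal.ofReal (θ ^ (s * 2)) *
        (decayFun n g r ρ - ENNReal.ofReal (θ ^ (2 * r + (n : ℝ))) * decayFun n g r (θ * ρ))
      = ENNReal.ofReal (θ ^ (s * 2)) *
        (ENNReal.ofReal (ρ ^ (-(2 * r + (n : ℝ)))) * I ρ -
          ENNReal.ofReal (ρ ^ (-(2 * r + (n : ℝ)))) * I (θ * ρ)) := by
        rw [hFρ, hFθ, ← mul_assoc, hcK]
    _ ≤ ENNReal.ofReal (θ ^ (s * 2)) *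
        (ENNReal.ofReal (ρ ^ (-(2 * r + (n : ℝ)))) * (I ρ - I (θ * ρ))) := by
        refine mul_le_mul_right ?_ _
        rw [tsub_le_iff_right, ← mul_add]
        exact mul_le_mul_right le_tsub_add _
    _ = ENNReal.ofReal (ρ ^ (-(2 * (r + s) + (n : ℝ)))) *
        (ENNReal.ofReal (((θ * ρ) ^ s) ^ 2) * (I ρ - I (θ * ρ))) := by
        rw [sq_rpow_eq _ _ hθρ.le, ← mul_assoc, ← mul_assoc, hK2]
    _ ≤ _ := key

theorem stmt15 (n : ℕ) (hn : 1 ≤ n) (s : ℝ) (hs : 0 ≤ s)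
    (g : EuclideanSpace ℝ (Fin n) → ℂ) (hg_meas : Measurable g)
    (hg : MemLp g 2 (volume : Measure (EuclideanSpace ℝ (Fin n))))
    (hh : MemLp (fun ξ : EuclideanSpace ℝ (Fin n) => ((‖ξ‖ ^ s : ℝ) : ℂ) * g ξ) 2
      (volume : Measure (EuclideanSpace ℝ (Fin n))))
    (rstar : ℝ) (hlow : -(n : ℝ) / 2 < rstar)
    (hPm : 0 < Pminus n g rstar) (hPp : Pplus n g rstar < ⊤) :
    0 < Pminus n (fun ξ => ((‖ξ‖ ^ s : ℝ) : ℂ) * g ξ) (rstar + s) ∧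
    Pplus n (fun ξ => ((‖ξ‖ ^ s : ℝ) : ℂ) * g ξ) (rstar + s) < ⊤ := by
  have hle : Pminus n g rstar ≤ Pplus n g rstar := liminf_le_limsup
  have hPmT : Pminus n g rstar ≠ ⊤ := (lt_of_le_of_lt hle hPp).ne
  have hupper : Pplus n (fun ξ => ((‖ξ‖ ^ s : ℝ) : ℂ) * g ξ) (rstar + s) ≤ Pplus n g rstar := by
    refine limsup_le_limsup ?_
    filter_upwards [eventually_mem_nhdsWithin] with ρ hρ
    exact decay_upper n s hs g rstar hρ
  refine ⟨?_, lt_of_le_of_lt hupper hPp⟩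
  set a := Pminus n g rstar / 2 with ha
  have ha0 : a ≠ 0 := (ENNReal.div_pos hPm.ne' ENNReal.ofNat_ne_top).ne'
  have haT : a ≠ ⊤ := (ENNReal.div_lt_top hPmT two_ne_zero).ne
  set b := Pplus n g rstar + 1 with hb
  have hbT : b ≠ ⊤ := ENNReal.add_ne_top.2 ⟨hPp.ne, ENNReal.one_ne_top⟩
  have hb0 : b ≠ 0 := by simp [hb]
  set δ := a / 2 / b with hδ
  have hδ0 : δ ≠ 0 :=
    (ENNReal.div_pos (ENNReal.div_pos ha0 ENNReal.ofNat_ne_top).ne' hbT).ne'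
  have hδT : δ ≠ ⊤ := (ENNReal.div_lt_top (ENNReal.div_lt_top haT two_ne_zero).ne hb0).ne
  set d := δ.toReal with hd
  have hdpos : 0 < d := ENNReal.toReal_pos hδ0 hδT
  set e := 2 * rstar + (n : ℝ) with he
  have hepos : 0 < e := by
    have : (0 : ℝ) < n := by exact_mod_cast Nat.pos_of_ne_zero (by omega)
    rw [he]; linarith
  set θ := (min d 1) ^ (1 / e) with hθdef
  have hmin : 0 < min d 1 := lt_min hdpos one_pos
  have hθ : 0 < θ := Real.rpow_pos_of_pos hmin _
  have hθe : θ ^ e ≤ d := by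
    have h1 : θ ^ e = min d 1 := by
      rw [hθdef, ← Real.rpow_mul hmin.le, one_div, inv_mul_cancel₀ hepos.ne', Real.rpow_one]
    rw [h1]; exact min_le_left _ _
  have hc : ENNReal.ofReal (θ ^ e) ≤ δ :=
    le_trans (ENNReal.ofReal_le_ofReal hθe) ENNReal.ofReal_toReal_le
  have htend : Tendsto (fun ρ : ℝ => θ * ρ) (𝓝[>] (0 : ℝ)) (𝓝[>] (0 : ℝ)) := by
    refine tendsto_nhdsWithin_of_tendsto_nhds_of_eventually_within _ ?_ ?_
    · have h2 : Tendsto (fun ρ : ℝ => θ * ρ) (𝓝 0) (𝓝 (θ * 0)) :=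
        (continuous_const.mul continuous_id).tendsto 0
      simpa using h2.mono_left nhdsWithin_le_nhds
    · filter_upwards [eventually_mem_nhdsWithin] with ρ (hρ : ρ ∈ Set.Ioi 0)
      exact Set.mem_Ioi.2 (mul_pos hθ hρ)
  have E1 : ∀ᶠ ρ in 𝓝[>] (0 : ℝ), a < decayFun n g rstar ρ :=
    eventually_lt_of_lt_liminf (ENNReal.half_lt_self hPm.ne' hPmT)
  have E2 : ∀ᶠ t in 𝓝[>] (0 : ℝ), decayFun n g rstar t < b :=
    eventually_lt_of_limsup_lt (ENNReal.lt_add_right hPp.ne one_ne_zero)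
  have E2' : ∀ᶠ ρ in 𝓝[>] (0 : ℝ), decayFun n g rstar (θ * ρ) < b := htend.eventually E2
  have Elow : ∀ᶠ ρ in 𝓝[>] (0 : ℝ), ENNReal.ofReal (θ ^ (s * 2)) * (a / 2) ≤
      decayFun n (fun ξ => ((‖ξ‖ ^ s : ℝ) : ℂ) * g ξ) (rstar + s) ρ := by
    filter_upwards [E1, E2', eventually_mem_nhdsWithin] with ρ h1 h2 (hρpos : ρ ∈ Set.Ioi 0)
    refine le_trans ?_ (decay_lower n s hs g rstar hρpos hθ)
    refine mul_le_mul_right ?_ _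
    have hcb : ENNReal.ofReal (θ ^ e) * decayFun n g rstar (θ * ρ) ≤ a / 2 := by
      calc ENNReal.ofReal (θ ^ e) * decayFun n g rstar (θ * ρ) ≤ δ * b :=
            mul_le_mul' hc h2.le
        _ = a / 2 := ENNReal.div_mul_cancel hb0 hbT
    calc a / 2 = a - a / 2 := (ENNReal.sub_half haT).symm
      _ ≤ decayFun n g rstar ρ -
          ENNReal.ofReal (θ ^ (2 * rstar + (n : ℝ))) * decayFun n g rstar (θ * ρ) :=
        tsub_le_tsub h1.le hcb
  have hfin : ENNReal.ofReal (θ ^ (s * 2)) * (a / 2) ≤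
      Pminus n (fun ξ => ((‖ξ‖ ^ s : ℝ) : ℂ) * g ξ) (rstar + s) := by
    have h3 := liminf_le_liminf Elow
    rwa [liminf_const] at h3
  refine lt_of_lt_of_le ?_ hfin
  exact ENNReal.mul_pos (ENNReal.ofReal_pos.2 (Real.rpow_pos_of_pos hθ _)).ne'
    (ENNReal.div_pos ha0 ENNReal.ofNat_ne_top).ne'
end
end

section
/- Let n ≥ 1, let g ∈ L²(ℝⁿ) be measurable, and let σ* > 0. Then g satisfies the weak A-condition with exponent σ* if and only if, setting r* = σ* − n/2 ∈ (−n/2, ∞), one has 0 < P_{r*}(g)₋ and P_{r*}(g)₊ < ∞. In other words, the decay character of g exists and lies in (−n/2, ∞) if and only if g satisfies the weak A-condition for some σ* > 0, and in that case the decay character equals σ* − n/2. -/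
open MeasureTheory Filter Topology
open scoped ENNReal NNReal

noncomputable section

namespace Stmt16
open Set


variable {n : ℕ}

def fE (g : EuclideanSpace ℝ (Fin n) → ℂ) (ξ : EuclideanSpace ℝ (Fin n)) : ℝ≥0∞ :=
  ENNReal.ofReal (‖g ξ‖ ^ 2)

def FF (n : ℕ) (g : EuclideanSpace ℝ (Fin n) → ℂ) (ρ : ℝ) : ℝ≥0∞ :=
  ∫⁻ ξ in {ξ : EuclideanSpace ℝ (Fin n) | ‖ξ‖ ≤ ρ}, fE g ξ

def Ann (n : ℕ) (j : ℤ) : Set (EuclideanSpace ℝ (Fin n)) :=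
  {ξ | (2 : ℝ) ^ (j : ℝ) ≤ ‖ξ‖ ∧ ‖ξ‖ < (2 : ℝ) ^ ((j : ℝ) + 1)}

def bb (n : ℕ) (g : EuclideanSpace ℝ (Fin n) → ℂ) (j : ℤ) : ℝ≥0∞ :=
  ∫⁻ ξ in Ann n j, fE g ξ

lemma ajBlock_eq (g : EuclideanSpace ℝ (Fin n) → ℂ) (j : ℤ) :
    ajBlock n g j = (bb n g j) ^ (1 / 2 : ℝ) := rfl

lemma sqrt_sq (x : ℝ≥0∞) : (x ^ (1 / 2 : ℝ)) ^ (2 : ℝ) = x := by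
  rw [← ENNReal.rpow_mul]; norm_num

lemma ajBlock_le_iff {g : EuclideanSpace ℝ (Fin n) → ℂ} {j : ℤ} {t : ℝ≥0∞} :
    ajBlock n g j ≤ t ↔ bb n g j ≤ t ^ (2 : ℝ) := by
  rw [ajBlock_eq, ← ENNReal.rpow_le_rpow_iff (z := (2 : ℝ)) two_pos, sqrt_sq]

lemma le_ajBlock_iff {g : EuclideanSpace ℝ (Fin n) → ℂ} {j : ℤ} {t : ℝ≥0∞} :
    t ≤ ajBlock n g j ↔ t ^ (2 : ℝ) ≤ bb n g j := by
  rw [ajBlock_eq, ← ENNReal.rpow_le_rpow_iff (z := (2 : ℝ)) two_pos, sqrt_sq]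

lemma FF_mono (g : EuclideanSpace ℝ (Fin n) → ℂ) {ρ ρ' : ℝ} (h : ρ ≤ ρ') :
    FF n g ρ ≤ FF n g ρ' :=
  lintegral_mono_set (fun ξ hξ => le_trans hξ h)

lemma bb_le_FF (g : EuclideanSpace ℝ (Fin n) → ℂ) {j : ℤ} {ρ : ℝ}
    (h : (2 : ℝ) ^ ((j : ℝ) + 1) ≤ ρ) : bb n g j ≤ FF n g ρ :=
  lintegral_mono_set (fun ξ hξ => le_trans hξ.2.le h)

lemma volume_singleton_zero (hn : 1 ≤ n) :
    (volume : Measure (EuclideanSpace ℝ (Fin n))) {0} = 0 := by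
  haveI : Nonempty (Fin n) := ⟨⟨0, hn⟩⟩
  haveI : Nontrivial (EuclideanSpace ℝ (Fin n)) := inferInstance
  have := Measure.addHaar_sphere (volume : Measure (EuclideanSpace ℝ (Fin n))) 0 0
  rwa [Metric.sphere_zero] at this

/-- membership in the dyadic annulus of the norm -/
lemma mem_Ann_floor {ξ : EuclideanSpace ℝ (Fin n)} (hξ : ξ ≠ 0) :
    ξ ∈ Ann n ⌊Real.logb 2 ‖ξ‖⌋ := by
  have hpos : (0 : ℝ) < ‖ξ‖ := norm_pos_iff.2 hξ
  constructor
  · calc (2 : ℝ) ^ ((⌊Real.logb 2 ‖ξ‖⌋ : ℤ) : ℝ)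
        ≤ (2 : ℝ) ^ (Real.logb 2 ‖ξ‖) := by
          apply Real.rpow_le_rpow_left_iff (by norm_num : (1:ℝ) < 2) |>.2
          exact Int.floor_le _
      _ = ‖ξ‖ := Real.rpow_logb (by norm_num) (by norm_num) hpos
  · calc ‖ξ‖ = (2 : ℝ) ^ (Real.logb 2 ‖ξ‖) :=
          (Real.rpow_logb (by norm_num) (by norm_num) hpos).symm
      _ < (2 : ℝ) ^ (((⌊Real.logb 2 ‖ξ‖⌋ : ℤ) : ℝ) + 1) := by
          apply Real.rpow_lt_rpow_left_iff (by norm_num : (1:ℝ) < 2) |>.2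
          have := Int.lt_floor_add_one (Real.logb 2 ‖ξ‖)
          push_cast
          linarith

lemma floor_le_of_norm_le {ξ : EuclideanSpace ℝ (Fin n)} (hξ : ξ ≠ 0) {J : ℤ}
    (h : ‖ξ‖ ≤ (2 : ℝ) ^ (J : ℝ)) : ⌊Real.logb 2 ‖ξ‖⌋ ≤ J := by
  have hpos : (0 : ℝ) < ‖ξ‖ := norm_pos_iff.2 hξ
  have h1 : Real.logb 2 ‖ξ‖ ≤ (J : ℝ) := by
    calc Real.logb 2 ‖ξ‖ ≤ Real.logb 2 ((2:ℝ) ^ (J : ℝ)) :=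
          Real.logb_le_logb_of_le (by norm_num) hpos h
      _ = (J : ℝ) := Real.logb_rpow (by norm_num) (by norm_num)
  have h2 : ((⌊Real.logb 2 ‖ξ‖⌋ : ℤ) : ℝ) ≤ (J : ℝ) := (Int.floor_le _).trans h1
  exact_mod_cast h2

lemma le_floor_of_rpow_lt {x : ℝ} {K : ℤ} (h : (2 : ℝ) ^ (K : ℝ) < x) :
    K ≤ ⌊Real.logb 2 x⌋ := by
  refine Int.le_floor.2 ?_
  calc (K : ℝ) = Real.logb 2 ((2:ℝ) ^ (K : ℝ)) :=
        (Real.logb_rpow (by norm_num) (by norm_num)).symm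
    _ ≤ Real.logb 2 x := Real.logb_le_logb_of_le (by norm_num)
        (Real.rpow_pos_of_pos two_pos _) h.le

lemma FF_le_tsum (hn : 1 ≤ n) (g : EuclideanSpace ℝ (Fin n) → ℂ) (J : ℤ) :
    FF n g ((2:ℝ)^(J:ℝ)) ≤ ∑' i : ℕ, bb n g (J - i) := by
  have hsub : {ξ : EuclideanSpace ℝ (Fin n) | ‖ξ‖ ≤ (2:ℝ)^(J:ℝ)} ⊆
      {(0 : EuclideanSpace ℝ (Fin n))} ∪ ⋃ i : ℕ, Ann n (J - i) := by
    intro ξ hξ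
    by_cases h0 : ξ = 0
    · exact Or.inl h0
    · right
      have hj := mem_Ann_floor h0
      have hle : ⌊Real.logb 2 ‖ξ‖⌋ ≤ J := floor_le_of_norm_le h0 hξ
      refine mem_iUnion.2 ⟨(J - ⌊Real.logb 2 ‖ξ‖⌋).toNat, ?_⟩
      have he : J - ((J - ⌊Real.logb 2 ‖ξ‖⌋).toNat : ℤ) = ⌊Real.logb 2 ‖ξ‖⌋ := by omega
      rw [he]; exact hj
  calc FF n g ((2:ℝ)^(J:ℝ))
      ≤ ∫⁻ ξ in ({(0 : EuclideanSpace ℝ (Fin n))} ∪ ⋃ i : ℕ, Ann n (J - i)), fE g ξ :=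
        lintegral_mono_set hsub
    _ ≤ (∫⁻ ξ in ({(0 : EuclideanSpace ℝ (Fin n))} : Set _), fE g ξ) +
        ∫⁻ ξ in (⋃ i : ℕ, Ann n (J - i)), fE g ξ := lintegral_union_le _ _ _
    _ ≤ 0 + ∑' i : ℕ, bb n g (J - i) := by
        refine add_le_add ?_ (lintegral_iUnion_le _ _)
        exact le_of_eq (setLIntegral_measure_zero _ _ (volume_singleton_zero hn))
    _ = ∑' i : ℕ, bb n g (J - i) := zero_add _

lemma FF_le_window (g : EuclideanSpace ℝ (Fin n) → ℂ) (J : ℤ) (M : ℕ) :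
    FF n g ((2:ℝ)^(J:ℝ)) ≤ FF n g ((2:ℝ)^(((J - M : ℤ)):ℝ)) +
      ∑ i ∈ Finset.range (M+1), bb n g (J - i) := by
  have hsub : {ξ : EuclideanSpace ℝ (Fin n) | ‖ξ‖ ≤ (2:ℝ)^(J:ℝ)} ⊆
      {ξ : EuclideanSpace ℝ (Fin n) | ‖ξ‖ ≤ (2:ℝ)^(((J - M : ℤ)):ℝ)} ∪
        ⋃ i : Fin (M+1), Ann n (J - (i : ℕ)) := by
    intro ξ hξ
    by_cases hc : ‖ξ‖ ≤ (2:ℝ)^(((J-M:ℤ)):ℝ)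
    · exact Or.inl hc
    · right
      push_neg at hc
      have h0 : ξ ≠ 0 := norm_pos_iff.1 (lt_trans (Real.rpow_pos_of_pos two_pos _) hc)
      have hj := mem_Ann_floor h0
      have hub : ⌊Real.logb 2 ‖ξ‖⌋ ≤ J := floor_le_of_norm_le h0 hξ
      have hlb : J - M ≤ ⌊Real.logb 2 ‖ξ‖⌋ := le_floor_of_rpow_lt hc
      refine mem_iUnion.2 ⟨⟨(J - ⌊Real.logb 2 ‖ξ‖⌋).toNat, by omega⟩, ?_⟩
      have he : J - (((J - ⌊Real.logb 2 ‖ξ‖⌋).toNat : ℕ) : ℤ) = ⌊Real.logb 2 ‖ξ‖⌋ := by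
        omega
      show ξ ∈ Ann n (J - (((J - ⌊Real.logb 2 ‖ξ‖⌋).toNat : ℕ) : ℤ))
      rw [he]; exact hj
  calc FF n g ((2:ℝ)^(J:ℝ))
      ≤ ∫⁻ ξ in ({ξ : EuclideanSpace ℝ (Fin n) | ‖ξ‖ ≤ (2:ℝ)^(((J - M : ℤ)):ℝ)} ∪
          ⋃ i : Fin (M+1), Ann n (J - (i : ℕ))), fE g ξ := lintegral_mono_set hsub
    _ ≤ FF n g ((2:ℝ)^(((J - M : ℤ)):ℝ)) +
        ∫⁻ ξ in (⋃ i : Fin (M+1), Ann n (J - (i : ℕ))), fE g ξ := lintegral_union_le _ _ _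
    _ ≤ FF n g ((2:ℝ)^(((J - M : ℤ)):ℝ)) + ∑' i : Fin (M+1), bb n g (J - (i : ℕ)) :=
        add_le_add_right (lintegral_iUnion_le _ _) _
    _ = FF n g ((2:ℝ)^(((J - M : ℤ)):ℝ)) + ∑ i ∈ Finset.range (M+1), bb n g (J - i) := by
        rw [tsum_fintype]
        congr 1
        exact Fin.sum_univ_eq_sum_range (fun i => bb n g (J - i)) (M+1)


variable {σ : ℝ}

lemma geo_bound (hσ : 0 < σ) {g : EuclideanSpace ℝ (Fin n) → ℂ} {D : ℝ} (hD : 0 ≤ D)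
    (hb : ∀ j : ℤ, bb n g j ≤ ENNReal.ofReal (D * (2:ℝ) ^ (2 * σ * (j:ℝ)))) (J : ℤ) :
    ∑' i : ℕ, bb n g (J - i) ≤
      ENNReal.ofReal (D * (2:ℝ) ^ (2 * σ * (J:ℝ))) *
        (1 - ENNReal.ofReal ((2:ℝ) ^ (-(2*σ))))⁻¹ := by
  have key : ∀ i : ℕ, bb n g (J - i) ≤
      ENNReal.ofReal (D * (2:ℝ) ^ (2*σ*(J:ℝ))) * (ENNReal.ofReal ((2:ℝ)^(-(2*σ))))^i := by
    intro i
    refine (hb (J - i)).trans (le_of_eq ?_)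
    rw [← ENNReal.ofReal_pow (by positivity), ← ENNReal.ofReal_mul (by positivity)]
    congr 1
    have hsplit : (2:ℝ)^(2*σ*(((J - (i:ℕ)) : ℤ):ℝ))
        = (2:ℝ)^(2*σ*(J:ℝ)) * (2:ℝ)^((-(2*σ))*(i:ℝ)) := by
      rw [← Real.rpow_add two_pos]
      congr 1
      push_cast; ring
    rw [hsplit, ← Real.rpow_natCast ((2:ℝ)^(-(2*σ))) i,
      ← Real.rpow_mul (by norm_num : (0:ℝ) ≤ 2)]
    ring
  calc ∑' i : ℕ, bb n g (J - i)
      ≤ ∑' i : ℕ, ENNReal.ofReal (D * (2:ℝ)^(2*σ*(J:ℝ))) *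
          (ENNReal.ofReal ((2:ℝ)^(-(2*σ))))^i := ENNReal.tsum_le_tsum key
    _ = _ := by rw [ENNReal.tsum_mul_left, ENNReal.tsum_geometric]

lemma geo_lt_top (hσ : 0 < σ) : (1 - ENNReal.ofReal ((2:ℝ) ^ (-(2*σ))))⁻¹ < ⊤ := by
  rw [ENNReal.inv_lt_top]
  have h1 : (2:ℝ)^(-(2*σ)) < 1 :=
    Real.rpow_lt_one_of_one_lt_of_neg (by norm_num) (by linarith)
  have h2 : ENNReal.ofReal ((2:ℝ)^(-(2*σ))) < 1 := by
    rw [← ENNReal.ofReal_one]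
    exact ENNReal.ofReal_lt_ofReal_iff one_pos |>.2 h1
  exact tsub_pos_of_lt h2

lemma decay_eq (g : EuclideanSpace ℝ (Fin n) → ℂ) (σ ρ : ℝ) :
    decayFun n g (σ - (n:ℝ)/2) ρ = ENNReal.ofReal (ρ ^ (-(2*σ))) * FF n g ρ := by
  have h : -(2*(σ - (n:ℝ)/2) + (n:ℝ)) = -(2*σ) := by ring
  unfold decayFun FF fE
  rw [h]

lemma ofReal_rpow_cancel {ρ : ℝ} (hρ : 0 < ρ) (σ : ℝ) :
    ENNReal.ofReal (ρ^(-(2*σ))) * ENNReal.ofReal (ρ^(2*σ)) = 1 := by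
  rw [← ENNReal.ofReal_mul (by positivity), ← Real.rpow_add hρ]
  norm_num

lemma eventually_nhdsGT {p : ℝ → Prop} :
    (∀ᶠ ρ in 𝓝[>] (0:ℝ), p ρ) ↔ ∃ ε > (0:ℝ), ∀ ρ : ℝ, 0 < ρ → ρ < ε → p ρ := by
  rw [(nhdsGT_basis (0:ℝ)).eventually_iff]
  exact ⟨fun ⟨ε,hε,h⟩ => ⟨ε,hε,fun ρ h1 h2 => h ⟨h1,h2⟩⟩,
    fun ⟨ε,hε,h⟩ => ⟨ε,hε,fun ρ hρ => h ρ hρ.1 hρ.2⟩⟩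

lemma crossing (jk : ℕ → ℤ) (hbot : Tendsto jk atTop atBot) (M : ℕ)
    (hM : ∀ k, |jk k - jk (k+1)| ≤ (M:ℤ)) {j₀ : ℤ} (hj₀ : j₀ ≤ jk 0) :
    ∃ k, j₀ - M ≤ jk k ∧ jk k ≤ j₀ := by
  classical
  have hex : ∃ k, jk k ≤ j₀ := (hbot.eventually (eventually_le_atBot j₀)).exists
  let k := Nat.find hex
  have hk : jk k ≤ j₀ := Nat.find_spec hex
  rcases Nat.eq_zero_or_pos k with h0 | hpos
  · refine ⟨k, ?_, hk⟩
    have : jk 0 ≤ j₀ := h0 ▸ hk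
    have : j₀ ≤ jk k := h0 ▸ hj₀
    omega
  · have h1 : ¬ jk (k-1) ≤ j₀ := Nat.find_min hex (by omega)
    have h2 := hM (k-1)
    have h3 : k - 1 + 1 = k := by omega
    rw [h3] at h2
    have h4 := abs_le.1 h2
    refine ⟨k, ?_, hk⟩
    omega

lemma lintegral_fE_lt_top {g : EuclideanSpace ℝ (Fin n) → ℂ}
    (hg : MemLp g 2 (volume : Measure (EuclideanSpace ℝ (Fin n)))) :
    ∫⁻ ξ, fE g ξ < ⊤ := by
  have h := lintegral_rpow_enorm_lt_top_of_eLpNorm_lt_top (f := g)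
    (by norm_num) (by norm_num) hg.2
  have he : ∀ ξ, fE g ξ = ‖g ξ‖ₑ ^ ((2:ℝ≥0∞).toReal) := by
    intro ξ
    rw [fE, ENNReal.ofReal_pow (norm_nonneg _), ofReal_norm_eq_enorm,
      ← ENNReal.rpow_natCast]
    norm_num
  simpa [he] using h

lemma sq_ofReal {a b : ℝ} (ha : 0 < a) :
    (ENNReal.ofReal (a * (2:ℝ)^b))^(2:ℝ) = ENNReal.ofReal (a^2 * (2:ℝ)^(2*b)) := by
  rw [ENNReal.ofReal_rpow_of_pos (by positivity)]
  congr 1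
  rw [Real.rpow_two, mul_pow, ← Real.rpow_two ((2:ℝ)^b), ← Real.rpow_mul (by norm_num : (0:ℝ) ≤ 2)]
  rw [mul_comm b 2]

lemma rpow_logb_cancel {ρ σ : ℝ} (hρ : 0 < ρ) :
    (2:ℝ) ^ (2 * σ * Real.logb 2 ρ) = ρ ^ (2*σ) := by
  rw [mul_comm (2*σ) (Real.logb 2 ρ), Real.rpow_mul (by norm_num : (0:ℝ) ≤ 2),
    Real.rpow_logb (by norm_num) (by norm_num) hρ]

lemma bb_le_total {g : EuclideanSpace ℝ (Fin n) → ℂ} (j : ℤ) :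
    bb n g j ≤ ∫⁻ ξ, fE g ξ := setLIntegral_le_lintegral _ _

end Stmt16

set_option maxHeartbeats 1000000

theorem stmt16 (n : ℕ) (hn : 1 ≤ n) (g : EuclideanSpace ℝ (Fin n) → ℂ)
    (hg_meas : Measurable g) (hg : MemLp g 2 (volume : Measure (EuclideanSpace ℝ (Fin n))))
    (σstar : ℝ) (hσ : 0 < σstar) :
    WeakACond n g σstar ↔
      (0 < Pminus n g (σstar - (n : ℝ) / 2) ∧ Pplus n g (σstar - (n : ℝ) / 2) < ⊤) := by
  classical
  have hn2 : (1:ℝ) < 2 := one_lt_two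
  constructor
  · rintro ⟨c, C, hc, hC, jk, hjk_bot, ⟨M, hM⟩, hupper, hlower⟩
    have hbU : ∀ j : ℤ, Stmt16.bb n g j ≤ ENNReal.ofReal (C^2 * (2:ℝ) ^ (2*σstar*(j:ℝ))) := by
      intro j
      have h1 := Stmt16.ajBlock_le_iff.1 (hupper j)
      rwa [Stmt16.sq_ofReal hC, show 2*(σstar*(j:ℝ)) = 2*σstar*(j:ℝ) from by ring] at h1
    have hbL : ∀ k : ℕ, ENNReal.ofReal (c^2 * (2:ℝ)^(2*σstar*((jk k:ℤ):ℝ))) ≤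
        Stmt16.bb n g (jk k) := by
      intro k
      have h1 := Stmt16.le_ajBlock_iff.1 (hlower k)
      rwa [Stmt16.sq_ofReal hc,
        show 2*(σstar*((jk k:ℤ):ℝ)) = 2*σstar*((jk k:ℤ):ℝ) from by ring] at h1
    constructor
    · -- Pminus positive
      set e := ENNReal.ofReal (c^2 * (2:ℝ)^(-(2*σstar)*((M:ℝ)+2))) with hedef
      have he : 0 < e := ENNReal.ofReal_pos.2 (by positivity)
      have hev : ∀ᶠ ρ in 𝓝[>] (0:ℝ), e ≤ decayFun n g (σstar - (n:ℝ)/2) ρ := by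
        rw [Stmt16.eventually_nhdsGT]
        refine ⟨min 1 ((2:ℝ)^((jk 0:ℝ)+1)), lt_min one_pos (Real.rpow_pos_of_pos two_pos _),
          ?_⟩
        intro ρ hρ hρlt
        have hρ1 : ρ < 1 := hρlt.trans_le (min_le_left _ _)
        have hρ2 : ρ < (2:ℝ)^((jk 0:ℝ)+1) := hρlt.trans_le (min_le_right _ _)
        set j₀ : ℤ := ⌊Real.logb 2 ρ⌋ - 1 with hj₀def
        have hj₀le : j₀ ≤ jk 0 := by
          have h1 : Real.logb 2 ρ < (jk 0:ℝ) + 1 := by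
            calc Real.logb 2 ρ < Real.logb 2 ((2:ℝ)^((jk 0:ℝ)+1)) :=
                  Real.logb_lt_logb hn2 hρ hρ2
              _ = (jk 0:ℝ) + 1 := Real.logb_rpow (by norm_num) (by norm_num)
          have h2 : ⌊Real.logb 2 ρ⌋ < jk 0 + 1 := Int.floor_lt.2 (by exact_mod_cast h1)
          omega
        obtain ⟨k, hk1, hk2⟩ := Stmt16.crossing jk hjk_bot M hM hj₀le
        have hjk_up : (2:ℝ)^((jk k:ℝ)+1) ≤ ρ := by
          have h1 : ((jk k:ℝ)+1) ≤ (⌊Real.logb 2 ρ⌋ : ℝ) := by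
            have : jk k + 1 ≤ ⌊Real.logb 2 ρ⌋ := by omega
            exact_mod_cast this
          calc (2:ℝ)^((jk k:ℝ)+1) ≤ (2:ℝ)^((⌊Real.logb 2 ρ⌋:ℝ)) :=
                (Real.rpow_le_rpow_left_iff hn2).2 h1
            _ ≤ (2:ℝ)^(Real.logb 2 ρ) :=
                (Real.rpow_le_rpow_left_iff hn2).2 (Int.floor_le _)
            _ = ρ := Real.rpow_logb (by norm_num) (by norm_num) hρ
        have hFF : ENNReal.ofReal (c^2 * (2:ℝ)^(2*σstar*((jk k:ℤ):ℝ))) ≤ Stmt16.FF n g ρ :=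
          (hbL k).trans (Stmt16.bb_le_FF g hjk_up)
        -- real inequality
        have hreal : c^2 * (2:ℝ)^(-(2*σstar)*((M:ℝ)+2)) ≤
            ρ^(-(2*σstar)) * (c^2 * (2:ℝ)^(2*σstar*((jk k:ℤ):ℝ))) := by
          have hlb : Real.logb 2 ρ - ((M:ℝ)+2) ≤ ((jk k : ℤ):ℝ) := by
            have h1 : (j₀ : ℝ) - M ≤ ((jk k:ℤ):ℝ) := by exact_mod_cast hk1
            have h2 : Real.logb 2 ρ - 1 < (⌊Real.logb 2 ρ⌋ : ℝ) := by
              have := Int.lt_floor_add_one (Real.logb 2 ρ); linarith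
            have h3 : (j₀ : ℝ) = (⌊Real.logb 2 ρ⌋ : ℝ) - 1 := by
              rw [hj₀def]; push_cast; ring
            linarith
          have hmono : (2:ℝ)^(2*σstar*(Real.logb 2 ρ - ((M:ℝ)+2))) ≤
              (2:ℝ)^(2*σstar*((jk k:ℤ):ℝ)) := by
            apply (Real.rpow_le_rpow_left_iff hn2).2
            have h2σ : (0:ℝ) < 2*σstar := by linarith
            nlinarith
          have hsplit : (2:ℝ)^(2*σstar*(Real.logb 2 ρ - ((M:ℝ)+2))) =
              ρ^(2*σstar) * (2:ℝ)^(-(2*σstar)*((M:ℝ)+2)) := by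
            rw [show 2*σstar*(Real.logb 2 ρ - ((M:ℝ)+2)) =
              2*σstar*Real.logb 2 ρ + (-(2*σstar)*((M:ℝ)+2)) from by ring,
              Real.rpow_add two_pos, Stmt16.rpow_logb_cancel hρ]
          have hcancel : ρ^(-(2*σstar)) * ρ^(2*σstar) = 1 := by
            rw [← Real.rpow_add hρ]; norm_num
          calc c^2 * (2:ℝ)^(-(2*σstar)*((M:ℝ)+2))
              = ρ^(-(2*σstar)) * (c^2 * (ρ^(2*σstar) * (2:ℝ)^(-(2*σstar)*((M:ℝ)+2)))) := by
                rw [show ρ^(-(2*σstar)) * (c^2 * (ρ^(2*σstar) * (2:ℝ)^(-(2*σstar)*((M:ℝ)+2))))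
                  = (ρ^(-(2*σstar)) * ρ^(2*σstar)) * (c^2 * (2:ℝ)^(-(2*σstar)*((M:ℝ)+2)))
                  from by ring, hcancel, one_mul]
            _ ≤ ρ^(-(2*σstar)) * (c^2 * (2:ℝ)^(2*σstar*((jk k:ℤ):ℝ))) := by
                apply mul_le_mul_of_nonneg_left _ (by positivity)
                rw [← hsplit]
                exact mul_le_mul_of_nonneg_left hmono (by positivity)
        rw [Stmt16.decay_eq]
        calc e ≤ ENNReal.ofReal (ρ^(-(2*σstar)) * (c^2 * (2:ℝ)^(2*σstar*((jk k:ℤ):ℝ)))) :=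
              ENNReal.ofReal_le_ofReal hreal
          _ = ENNReal.ofReal (ρ^(-(2*σstar))) *
              ENNReal.ofReal (c^2 * (2:ℝ)^(2*σstar*((jk k:ℤ):ℝ))) :=
              ENNReal.ofReal_mul (by positivity)
          _ ≤ ENNReal.ofReal (ρ^(-(2*σstar))) * Stmt16.FF n g ρ := mul_le_mul_right hFF _
      exact lt_of_lt_of_le he (le_liminf_of_le (by isBoundedDefault) hev)
    · -- Pplus finite
      have hGeo : (1 - ENNReal.ofReal ((2:ℝ)^(-(2*σstar))))⁻¹ < ⊤ := Stmt16.geo_lt_top hσ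
      set Geo := (1 - ENNReal.ofReal ((2:ℝ)^(-(2*σstar))))⁻¹ with hGeodef
      set K := ENNReal.ofReal (C^2 * (2:ℝ)^(2*σstar)) * Geo with hK
      have hKlt : K < ⊤ := ENNReal.mul_lt_top ENNReal.ofReal_lt_top hGeo
      have hev : ∀ᶠ ρ in 𝓝[>] (0:ℝ), decayFun n g (σstar - (n:ℝ)/2) ρ ≤ K := by
        rw [Stmt16.eventually_nhdsGT]
        refine ⟨1, one_pos, ?_⟩
        intro ρ hρ hρ1
        set J : ℤ := ⌈Real.logb 2 ρ⌉ with hJdef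
        have hρle : ρ ≤ (2:ℝ)^(J:ℝ) := by
          calc ρ = (2:ℝ)^(Real.logb 2 ρ) :=
                (Real.rpow_logb (by norm_num) (by norm_num) hρ).symm
            _ ≤ (2:ℝ)^(J:ℝ) := (Real.rpow_le_rpow_left_iff hn2).2 (Int.le_ceil _)
        have hJle : (2:ℝ)^(J:ℝ) ≤ 2*ρ := by
          calc (2:ℝ)^(J:ℝ) ≤ (2:ℝ)^(Real.logb 2 ρ + 1) :=
                (Real.rpow_le_rpow_left_iff hn2).2 (Int.ceil_lt_add_one _).le
            _ = (2:ℝ)^(Real.logb 2 ρ) * 2 := by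
                rw [Real.rpow_add two_pos, Real.rpow_one]
            _ = 2*ρ := by rw [Real.rpow_logb (by norm_num) (by norm_num) hρ]; ring
        have h1 : Stmt16.FF n g ρ ≤ ENNReal.ofReal (C^2 * (2:ℝ)^(2*σstar*(J:ℝ))) * Geo :=
          (Stmt16.FF_mono g hρle).trans ((Stmt16.FF_le_tsum hn g J).trans
            (Stmt16.geo_bound hσ (by positivity) hbU J))
        have h2 : C^2 * (2:ℝ)^(2*σstar*(J:ℝ)) ≤
            (C^2 * (2:ℝ)^(2*σstar)) * ρ^(2*σstar) := by
          have ha : (2:ℝ)^(2*σstar*(J:ℝ)) ≤ (2*ρ)^(2*σstar) := by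
            rw [show 2*σstar*(J:ℝ) = (J:ℝ)*(2*σstar) from by ring,
              Real.rpow_mul (by norm_num : (0:ℝ) ≤ 2)]
            exact Real.rpow_le_rpow (by positivity) hJle (by linarith)
          have hb2 : (2*ρ)^(2*σstar) = (2:ℝ)^(2*σstar) * ρ^(2*σstar) :=
            Real.mul_rpow (by norm_num) hρ.le
          calc C^2 * (2:ℝ)^(2*σstar*(J:ℝ)) ≤ C^2 * ((2*ρ)^(2*σstar)) :=
              mul_le_mul_of_nonneg_left ha (sq_nonneg C)
            _ = (C^2 * (2:ℝ)^(2*σstar)) * ρ^(2*σstar) := by rw [hb2]; ring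
        rw [Stmt16.decay_eq]
        have hcancel2 : ENNReal.ofReal (ρ^(-(2*σstar))) *
            ENNReal.ofReal ((C^2 * (2:ℝ)^(2*σstar)) * ρ^(2*σstar)) =
            ENNReal.ofReal (C^2 * (2:ℝ)^(2*σstar)) := by
          rw [← ENNReal.ofReal_mul (by positivity)]
          congr 1
          have hc2 : ρ^(-(2*σstar)) * ρ^(2*σstar) = 1 := by
            rw [← Real.rpow_add hρ]; norm_num
          calc ρ^(-(2*σstar)) * ((C^2 * (2:ℝ)^(2*σstar)) * ρ^(2*σstar))
              = (C^2 * (2:ℝ)^(2*σstar)) * (ρ^(-(2*σstar)) * ρ^(2*σstar)) := by ring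
            _ = _ := by rw [hc2, mul_one]
        calc ENNReal.ofReal (ρ^(-(2*σstar))) * Stmt16.FF n g ρ
            ≤ ENNReal.ofReal (ρ^(-(2*σstar))) *
              (ENNReal.ofReal ((C^2 * (2:ℝ)^(2*σstar)) * ρ^(2*σstar)) * Geo) :=
              mul_le_mul_right (h1.trans
                (mul_le_mul_left (ENNReal.ofReal_le_ofReal h2) _)) _
          _ = (ENNReal.ofReal (ρ^(-(2*σstar))) *
              ENNReal.ofReal ((C^2 * (2:ℝ)^(2*σstar)) * ρ^(2*σstar))) * Geo := by ring
          _ = K := by rw [hcancel2]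
      exact lt_of_le_of_lt (limsup_le_of_le (by isBoundedDefault) hev) hKlt
  · rintro ⟨hPm, hPp⟩
    have h2σ : (0:ℝ) < 2*σstar := by linarith
    obtain ⟨e0, he0, he0lt⟩ := exists_between hPm
    set e := min e0 1 with hedef
    have heF : e ≠ ⊤ := ne_top_of_le_ne_top ENNReal.one_ne_top (min_le_right _ _)
    have hepos : 0 < e := lt_min he0 one_pos
    have helt : e < Pminus n g (σstar - (n:ℝ)/2) :=
      lt_of_le_of_lt (min_le_left _ _) he0lt
    obtain ⟨K, hPK, hKtop⟩ := exists_between hPp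
    have hev1 : ∀ᶠ ρ in 𝓝[>] (0:ℝ), e < decayFun n g (σstar - (n:ℝ)/2) ρ :=
      eventually_lt_of_lt_liminf helt
    have hev2 : ∀ᶠ ρ in 𝓝[>] (0:ℝ), decayFun n g (σstar - (n:ℝ)/2) ρ < K :=
      eventually_lt_of_limsup_lt hPK
    obtain ⟨ρ₁, hρ₁pos, hbnd⟩ := Stmt16.eventually_nhdsGT.1 (hev1.and hev2)
    set ρ₀ := min ρ₁ 1 with hρ₀def
    have hρ₀pos : 0 < ρ₀ := lt_min hρ₁pos one_pos
    set er := e.toReal with herdef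
    set Kr := K.toReal with hKrdef
    have herpos : 0 < er := ENNReal.toReal_pos hepos.ne' heF
    have hKrnn : 0 ≤ Kr := ENNReal.toReal_nonneg
    have hKeq : K = ENNReal.ofReal Kr := (ENNReal.ofReal_toReal hKtop.ne).symm
    have heeq : e = ENNReal.ofReal er := (ENNReal.ofReal_toReal heF).symm
    have hFub : ∀ ρ : ℝ, 0 < ρ → ρ < ρ₀ →
        Stmt16.FF n g ρ ≤ ENNReal.ofReal (Kr * ρ^(2*σstar)) := by
      intro ρ h1 h2
      have hd := (hbnd ρ h1 (h2.trans_le (min_le_left _ _))).2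
      rw [Stmt16.decay_eq] at hd
      have hsplit : Stmt16.FF n g ρ = ENNReal.ofReal (ρ^(2*σstar)) *
          (ENNReal.ofReal (ρ^(-(2*σstar))) * Stmt16.FF n g ρ) := by
        rw [← mul_assoc, mul_comm (ENNReal.ofReal (ρ^(2*σstar))),
          Stmt16.ofReal_rpow_cancel h1, one_mul]
      rw [hsplit]
      calc ENNReal.ofReal (ρ^(2*σstar)) *
            (ENNReal.ofReal (ρ^(-(2*σstar))) * Stmt16.FF n g ρ)
          ≤ ENNReal.ofReal (ρ^(2*σstar)) * K := mul_le_mul_right hd.le _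
        _ = ENNReal.ofReal (Kr * ρ^(2*σstar)) := by
            rw [hKeq, ← ENNReal.ofReal_mul (by positivity), mul_comm]
    have hFlb : ∀ ρ : ℝ, 0 < ρ → ρ < ρ₀ →
        ENNReal.ofReal (er * ρ^(2*σstar)) ≤ Stmt16.FF n g ρ := by
      intro ρ h1 h2
      have hd := (hbnd ρ h1 (h2.trans_le (min_le_left _ _))).1
      rw [Stmt16.decay_eq] at hd
      calc ENNReal.ofReal (er * ρ^(2*σstar))
          = ENNReal.ofReal (ρ^(2*σstar)) * e := by
            rw [heeq, ← ENNReal.ofReal_mul (by positivity), mul_comm]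
        _ ≤ ENNReal.ofReal (ρ^(2*σstar)) *
            (ENNReal.ofReal (ρ^(-(2*σstar))) * Stmt16.FF n g ρ) :=
            mul_le_mul_right hd.le _
        _ = Stmt16.FF n g ρ := by
            rw [← mul_assoc, mul_comm (ENNReal.ofReal (ρ^(2*σstar))),
              Stmt16.ofReal_rpow_cancel h1, one_mul]
    set j₁ : ℤ := ⌊Real.logb 2 ρ₀⌋ - 1 with hj₁def
    have hsmall : ∀ j : ℤ, j ≤ j₁ → (2:ℝ)^(j:ℝ) < ρ₀ := by
      intro j hj
      have h1 : (j:ℝ) < Real.logb 2 ρ₀ := by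
        have h2 : (j:ℝ) ≤ (⌊Real.logb 2 ρ₀⌋:ℝ) - 1 := by
          have : (j:ℝ) ≤ ((⌊Real.logb 2 ρ₀⌋ - 1 : ℤ):ℝ) := by exact_mod_cast hj
          push_cast at this; linarith
        have h3 : (⌊Real.logb 2 ρ₀⌋:ℝ) ≤ Real.logb 2 ρ₀ := Int.floor_le _
        linarith
      calc (2:ℝ)^(j:ℝ) < (2:ℝ)^(Real.logb 2 ρ₀) :=
            (Real.rpow_lt_rpow_left_iff one_lt_two).2 h1
        _ = ρ₀ := Real.rpow_logb (by norm_num) (by norm_num) hρ₀pos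
    -- total integral
    have hItot : ∫⁻ ξ, Stmt16.fE g ξ < ⊤ := Stmt16.lintegral_fE_lt_top hg
    set Gr := (∫⁻ ξ, Stmt16.fE g ξ).toReal with hGrdef
    have hGrnn : 0 ≤ Gr := ENNReal.toReal_nonneg
    set mx := max (Kr * (2:ℝ)^(2*σstar)) (Gr * (2:ℝ)^(-(2*σstar)*(j₁:ℝ))) with hmxdef
    have hmxnn : 0 ≤ mx := le_max_of_le_left (by positivity)
    set Cr := Real.sqrt mx + 1 with hCrdef
    have hCrpos : 0 < Cr := by positivity
    have hCrsq : mx ≤ Cr^2 := by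
      have h1 := Real.sq_sqrt hmxnn
      have h2 := Real.sqrt_nonneg mx
      nlinarith
    have hupper : ∀ j : ℤ, ajBlock n g j ≤
        ENNReal.ofReal (Cr * (2:ℝ)^(σstar*(j:ℝ))) := by
      intro j
      rw [Stmt16.ajBlock_le_iff, Stmt16.sq_ofReal hCrpos]
      by_cases hcase : j + 1 ≤ j₁
      · have hlt : (2:ℝ)^(((j+1:ℤ)):ℝ) < ρ₀ := hsmall (j+1) hcase
        have hple : (2:ℝ)^((j:ℝ)+1) ≤ (2:ℝ)^(((j+1:ℤ)):ℝ) := by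
          apply le_of_eq; congr 1; push_cast; ring
        have h1 : Stmt16.bb n g j ≤ Stmt16.FF n g ((2:ℝ)^(((j+1:ℤ)):ℝ)) :=
          Stmt16.bb_le_FF g hple
        have h2 := hFub ((2:ℝ)^(((j+1:ℤ)):ℝ)) (Real.rpow_pos_of_pos two_pos _) hlt
        refine (h1.trans h2).trans (ENNReal.ofReal_le_ofReal ?_)
        have h3 : ((2:ℝ)^(((j+1:ℤ)):ℝ))^(2*σstar) =
            (2:ℝ)^(2*σstar) * (2:ℝ)^(2*(σstar*(j:ℝ))) := by
          rw [← Real.rpow_mul (by norm_num : (0:ℝ) ≤ 2), ← Real.rpow_add two_pos]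
          congr 1; push_cast; ring
        rw [h3]
        have h4 : Kr * (2:ℝ)^(2*σstar) ≤ Cr^2 := le_trans (le_max_left _ _) hCrsq
        have h5 : (0:ℝ) < (2:ℝ)^(2*(σstar*(j:ℝ))) := Real.rpow_pos_of_pos two_pos _
        nlinarith
      · have hj : j₁ ≤ j := by omega
        have h1 : Stmt16.bb n g j ≤ ENNReal.ofReal Gr := by
          rw [hGrdef, ENNReal.ofReal_toReal hItot.ne]
          exact Stmt16.bb_le_total j
        refine h1.trans (ENNReal.ofReal_le_ofReal ?_)
        have h5 : Gr * (2:ℝ)^(-(2*σstar)*(j₁:ℝ)) ≤ Cr^2 := le_trans (le_max_right _ _) hCrsq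
        have hx : (2:ℝ)^(2*σstar*(j₁:ℝ)) ≤ (2:ℝ)^(2*(σstar*(j:ℝ))) := by
          apply (Real.rpow_le_rpow_left_iff one_lt_two).2
          have : (j₁:ℝ) ≤ (j:ℝ) := by exact_mod_cast hj
          nlinarith
        have hid : Gr = Gr * (2:ℝ)^(-(2*σstar)*(j₁:ℝ)) * (2:ℝ)^(2*σstar*(j₁:ℝ)) := by
          rw [mul_assoc, ← Real.rpow_add two_pos,
            show -(2*σstar)*(j₁:ℝ) + 2*σstar*(j₁:ℝ) = 0 from by ring,
            Real.rpow_zero, mul_one]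
        calc Gr = Gr * (2:ℝ)^(-(2*σstar)*(j₁:ℝ)) * (2:ℝ)^(2*σstar*(j₁:ℝ)) := hid
          _ ≤ Cr^2 * (2:ℝ)^(2*σstar*(j₁:ℝ)) :=
              mul_le_mul_of_nonneg_right h5 (by positivity)
          _ ≤ Cr^2 * (2:ℝ)^(2*(σstar*(j:ℝ))) :=
              mul_le_mul_of_nonneg_left hx (sq_nonneg Cr)
    -- choose N for the window
    have hone : (1:ℝ) < (2:ℝ)^(2*σstar) := by
      rw [show (1:ℝ) = (2:ℝ)^(0:ℝ) from (Real.rpow_zero 2).symm]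
      exact (Real.rpow_lt_rpow_left_iff one_lt_two).2 h2σ
    obtain ⟨N, hN⟩ := pow_unbounded_of_one_lt (2*Kr/er) hone
    have hNpow : ((2:ℝ)^(2*σstar))^N = (2:ℝ)^(2*σstar*(N:ℝ)) := by
      rw [← Real.rpow_natCast ((2:ℝ)^(2*σstar)) N,
        ← Real.rpow_mul (by norm_num : (0:ℝ) ≤ 2)]
    have hKr2 : 2*Kr ≤ er * (2:ℝ)^(2*σstar*(N:ℝ)) := by
      rw [← hNpow]
      have h := (div_lt_iff₀ herpos).1 hN
      nlinarith
    set c2 := er / (2*((N:ℝ)+1)) with hc2def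
    have hc2pos : 0 < c2 := by positivity
    have hwin : ∀ J : ℤ, J ≤ j₁ → ∃ i : ℕ, i ≤ N ∧
        ENNReal.ofReal (c2 * (2:ℝ)^(2*σstar*(((J - (i:ℕ) : ℤ)):ℝ))) ≤
          Stmt16.bb n g (J - (i:ℕ)) := by
      intro J hJ
      have hρJpos : (0:ℝ) < (2:ℝ)^((J:ℝ)) := Real.rpow_pos_of_pos two_pos _
      have hρJlt : (2:ℝ)^((J:ℝ)) < ρ₀ := hsmall J hJ
      have hXJ : ((2:ℝ)^((J:ℝ)))^(2*σstar) = (2:ℝ)^(2*σstar*(J:ℝ)) := by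
        rw [← Real.rpow_mul (by norm_num : (0:ℝ) ≤ 2)]
        congr 1; ring
      have h1 : ENNReal.ofReal (er * (2:ℝ)^(2*σstar*(J:ℝ))) ≤
          Stmt16.FF n g ((2:ℝ)^((J:ℝ))) := by
        have h := hFlb _ hρJpos hρJlt
        rwa [hXJ] at h
      have h2 := Stmt16.FF_le_window g J N
      have hρJN : (2:ℝ)^((((J - (N:ℕ) : ℤ)):ℝ)) < ρ₀ := hsmall _ (by omega)
      have h3 : Stmt16.FF n g ((2:ℝ)^((((J - (N:ℕ) : ℤ)):ℝ))) ≤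
          ENNReal.ofReal ((er/2) * (2:ℝ)^(2*σstar*(J:ℝ))) := by
        refine (hFub _ (Real.rpow_pos_of_pos two_pos _) hρJN).trans
          (ENNReal.ofReal_le_ofReal ?_)
        have hXJN : ((2:ℝ)^((((J - (N:ℕ) : ℤ)):ℝ)))^(2*σstar) =
            (2:ℝ)^(2*σstar*((((J - (N:ℕ) : ℤ)):ℝ))) := by
          rw [← Real.rpow_mul (by norm_num : (0:ℝ) ≤ 2)]
          congr 1; ring
        rw [hXJN]
        have hsplitJ : (2:ℝ)^(2*σstar*(J:ℝ)) =
            (2:ℝ)^(2*σstar*((((J - (N:ℕ) : ℤ)):ℝ))) * (2:ℝ)^(2*σstar*(N:ℝ)) := by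
          rw [← Real.rpow_add two_pos]; congr 1; push_cast; ring
        have hp : (0:ℝ) < (2:ℝ)^(2*σstar*((((J - (N:ℕ) : ℤ)):ℝ))) :=
          Real.rpow_pos_of_pos two_pos _
        rw [hsplitJ]
        calc Kr * (2:ℝ)^(2*σstar*((((J - (N:ℕ) : ℤ)):ℝ)))
            ≤ (er/2 * (2:ℝ)^(2*σstar*(N:ℝ))) *
              (2:ℝ)^(2*σstar*((((J - (N:ℕ) : ℤ)):ℝ))) := by
              apply mul_le_mul_of_nonneg_right _ hp.le
              linarith
          _ = er/2 * ((2:ℝ)^(2*σstar*((((J - (N:ℕ) : ℤ)):ℝ))) *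
              (2:ℝ)^(2*σstar*(N:ℝ))) := by ring
      set A2 := ENNReal.ofReal ((er/2) * (2:ℝ)^(2*σstar*(J:ℝ))) with hA2def
      have hsum : A2 + A2 ≤ A2 + ∑ i ∈ Finset.range (N+1), Stmt16.bb n g (J - i) := by
        have ha : ENNReal.ofReal (er * (2:ℝ)^(2*σstar*(J:ℝ))) = A2 + A2 := by
          rw [hA2def, ← ENNReal.ofReal_add (by positivity) (by positivity)]
          congr 1; ring
        calc A2 + A2 = ENNReal.ofReal (er * (2:ℝ)^(2*σstar*(J:ℝ))) := ha.symm
          _ ≤ Stmt16.FF n g ((2:ℝ)^((J:ℝ))) := h1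
          _ ≤ Stmt16.FF n g ((2:ℝ)^((((J - (N:ℕ) : ℤ)):ℝ))) +
              ∑ i ∈ Finset.range (N+1), Stmt16.bb n g (J - i) := h2
          _ ≤ A2 + ∑ i ∈ Finset.range (N+1), Stmt16.bb n g (J - i) :=
              add_le_add_left h3 _
      have hA2le : A2 ≤ ∑ i ∈ Finset.range (N+1), Stmt16.bb n g (J - i) :=
        (ENNReal.add_le_add_iff_left ENNReal.ofReal_ne_top).1 hsum
      obtain ⟨i₀, hi₀mem, hi₀⟩ := Finset.exists_mem_eq_sup (Finset.range (N+1))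
        ⟨0, Finset.mem_range.2 (Nat.succ_pos N)⟩ (fun i => Stmt16.bb n g (J - i))
      have hsup : ∑ i ∈ Finset.range (N+1), Stmt16.bb n g (J - i) ≤
          (((N:ℝ≥0∞))+1) * Stmt16.bb n g (J - i₀) := by
        calc ∑ i ∈ Finset.range (N+1), Stmt16.bb n g (J - i)
            ≤ (N+1) • ((Finset.range (N+1)).sup (fun i => Stmt16.bb n g (J - i))) := by
              have h := Finset.sum_le_card_nsmul (Finset.range (N+1))
                (fun i => Stmt16.bb n g (J - i))
                ((Finset.range (N+1)).sup (fun i => Stmt16.bb n g (J - i)))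
                (fun i hi => by
                  show Stmt16.bb n g (J - i) ≤
                    (Finset.range (N+1)).sup (fun i => Stmt16.bb n g (J - i))
                  exact Finset.le_sup (α := ℝ≥0∞) (s := Finset.range (N+1)) (f := fun j => Stmt16.bb n g (J - j)) hi)
              rwa [Finset.card_range] at h
          _ = (((N:ℝ≥0∞))+1) * Stmt16.bb n g (J - i₀) := by
              rw [hi₀, nsmul_eq_mul]; push_cast; ring
      have hcast : (((N:ℝ≥0∞))+1) = ENNReal.ofReal ((N:ℝ)+1) := by
        rw [ENNReal.ofReal_add (Nat.cast_nonneg N) zero_le_one,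
          ENNReal.ofReal_natCast, ENNReal.ofReal_one]
      have hA2eq : A2 = (((N:ℝ≥0∞))+1) *
          ENNReal.ofReal (c2 * (2:ℝ)^(2*σstar*(J:ℝ))) := by
        rw [hcast, ← ENNReal.ofReal_mul (by positivity), hA2def]
        congr 1
        rw [hc2def]
        field_simp
      have hbbi : ENNReal.ofReal (c2 * (2:ℝ)^(2*σstar*(J:ℝ))) ≤
          Stmt16.bb n g (J - i₀) := by
        have h := hA2le.trans hsup
        rw [hA2eq] at h
        have hne0 : (((N:ℝ≥0∞))+1) ≠ 0 := by simp
        have hnetop : (((N:ℝ≥0∞))+1) ≠ ⊤ := by simp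
        exact (ENNReal.mul_le_mul_iff_right hne0 hnetop).1 h
      refine ⟨i₀, Nat.lt_succ_iff.1 (Finset.mem_range.1 hi₀mem), ?_⟩
      refine le_trans (ENNReal.ofReal_le_ofReal ?_) hbbi
      apply mul_le_mul_of_nonneg_left _ hc2pos.le
      apply (Real.rpow_le_rpow_left_iff one_lt_two).2
      have hcst : (((J - (i₀:ℕ) : ℤ)):ℝ) ≤ (J:ℝ) := by
        push_cast
        have : (0:ℝ) ≤ (i₀:ℝ) := Nat.cast_nonneg i₀
        linarith
      exact mul_le_mul_of_nonneg_left hcst h2σ.le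
    have hwin' : ∀ k : ℕ, ∃ i : ℕ, i ≤ N ∧
        ENNReal.ofReal (c2 * (2:ℝ)^(2*σstar*(((j₁ - (k:ℕ) - (i:ℕ)) : ℤ):ℝ))) ≤
          Stmt16.bb n g (j₁ - (k:ℕ) - (i:ℕ)) := by
      intro k
      obtain ⟨i, hi, hb⟩ := hwin (j₁ - k) (by omega)
      exact ⟨i, hi, hb⟩
    choose I hIle hIbb using hwin'
    refine ⟨Real.sqrt c2, Cr, Real.sqrt_pos.2 hc2pos, hCrpos,
      fun k => j₁ - k - I k, ?_, ⟨N+1, ?_⟩, hupper, ?_⟩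
    · rw [tendsto_atBot]
      intro b
      filter_upwards [eventually_ge_atTop (j₁ - b).toNat] with k hk
      have h1 := hIle k
      omega
    · intro k
      have h1 := hIle k
      have h2 := hIle (k+1)
      rw [abs_le]
      constructor <;> push_cast <;> omega
    · intro k
      rw [Stmt16.le_ajBlock_iff, Stmt16.sq_ofReal (Real.sqrt_pos.2 hc2pos),
        Real.sq_sqrt hc2pos.le]
      have h := hIbb k
      rwa [show 2*σstar*(((j₁ - (k:ℕ) - (I k:ℕ)) : ℤ):ℝ) =
        2*(σstar*(((j₁ - (k:ℕ) - (I k:ℕ)) : ℤ):ℝ)) from by ring] at h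
end
end

section
/- For every n ≥ 1 and every r ∈ (−n/2, ∞), there exists a measurable g ∈ L²(ℝⁿ) such that 0 < P_r(g)₋ < P_r(g)₊ < ∞; indeed one may choose g (for example, g(ξ) = |ξ|^r on the union of the dyadic annuli {2^{2j−1} ≤ |ξ| ≤ 2^{2j}}, j ≤ 0, and g = 0 elsewhere) so that P_r(g)₋ = 2^{−(2r+n)} P_r(g)₊. In particular, for such g the limit lim_{ρ→0⁺} ρ^{−(2r+n)} ∫_{|ξ|≤ρ} |g(ξ)|² dξ does not exist, although the decay character of g exists (in the relaxed sense 0 < P_r(g)₋ ≤ P_r(g)₊ < ∞) and equals r. -/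
open MeasureTheory Filter Topology
open scoped ENNReal NNReal

noncomputable section

lemma annulus_lintegral (n : ℕ) (hn : 1 ≤ n) (r : ℝ) (hα : 0 < 2*r + n)
    (a b : ℝ) (ha : 0 < a) (hab : a ≤ b) :
    ∫⁻ ξ in {ξ : EuclideanSpace ℝ (Fin n) | ‖ξ‖ ∈ Set.Ioc a b}, ENNReal.ofReal (‖ξ‖ ^ (2*r)) =
      ENNReal.ofReal (((n : ℝ) * (volume (Metric.ball (0:EuclideanSpace ℝ (Fin n)) 1)).toReal / (2*r+n))
        * (b ^ (2*r+n) - a ^ (2*r+n))) := by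
  set E := EuclideanSpace ℝ (Fin n)
  haveI : Nontrivial E := by
    apply Module.nontrivial_of_finrank_pos (R := ℝ)
    simpa [E] using Nat.lt_of_lt_of_le Nat.zero_lt_one hn
  have hdim : Module.finrank ℝ E = n := by simp [E]
  set f : ℝ → ℝ := (Set.Ioc a b).indicator (fun y => y ^ (2*r)) with hf
  have hb : 0 < b := lt_of_lt_of_le ha hab
  have hK : IsCompact (Metric.closedBall (0:E) b \ Metric.ball (0:E) a) :=
    (isCompact_closedBall _ _).diff Metric.isOpen_ball
  have hsub : {ξ : E | ‖ξ‖ ∈ Set.Ioc a b} ⊆ Metric.closedBall (0:E) b \ Metric.ball (0:E) a := by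
    intro ξ hξ
    simp only [Set.mem_setOf_eq, Set.mem_Ioc] at hξ
    simp [Set.mem_diff, Metric.mem_closedBall, Metric.mem_ball, dist_zero_right, hξ.2, not_lt,
      hξ.1.le]
  have hmeas : MeasurableSet {ξ : E | ‖ξ‖ ∈ Set.Ioc a b} :=
    measurable_norm measurableSet_Ioc
  have hcont : ContinuousOn (fun ξ : E => ‖ξ‖ ^ (2*r))
      (Metric.closedBall (0:E) b \ Metric.ball (0:E) a) := by
    apply ContinuousOn.rpow_const continuous_norm.continuousOn
    intro x hx
    left
    have : a ≤ ‖x‖ := by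
      have := hx.2
      simpa [Metric.mem_ball, dist_zero_right, not_lt] using this
    exact (lt_of_lt_of_le ha this).ne'
  have hind : (fun ξ : E => f ‖ξ‖) =
      {ξ : E | ‖ξ‖ ∈ Set.Ioc a b}.indicator (fun ξ => ‖ξ‖ ^ (2*r)) := by
    funext ξ
    by_cases h : ‖ξ‖ ∈ Set.Ioc a b
    · rw [hf, Set.indicator_of_mem h,
        Set.indicator_of_mem (show ξ ∈ {ξ : E | ‖ξ‖ ∈ Set.Ioc a b} from h)]
    · rw [hf, Set.indicator_of_notMem h,
        Set.indicator_of_notMem (show ξ ∉ {ξ : E | ‖ξ‖ ∈ Set.Ioc a b} from h)]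
  have hint : Integrable (fun ξ : E => f ‖ξ‖) := by
    rw [hind, integrable_indicator_iff hmeas]
    exact ((hcont.integrableOn_compact hK).mono_set hsub)
  have hnn : 0 ≤ᶠ[ae (volume : Measure E)] fun ξ => f ‖ξ‖ := by
    filter_upwards with ξ
    exact Set.indicator_nonneg (fun y hy => Real.rpow_nonneg (le_of_lt (lt_trans ha hy.1)) _) _
  calc ∫⁻ ξ in {ξ : E | ‖ξ‖ ∈ Set.Ioc a b}, ENNReal.ofReal (‖ξ‖ ^ (2*r))
      = ∫⁻ ξ : E, ENNReal.ofReal (f ‖ξ‖) := by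
        rw [← lintegral_indicator hmeas]
        congr 1
        funext ξ
        by_cases h : ‖ξ‖ ∈ Set.Ioc a b
        · rw [Set.indicator_of_mem (show ξ ∈ {ξ : E | ‖ξ‖ ∈ Set.Ioc a b} from h),
            hf, Set.indicator_of_mem h]
        · rw [Set.indicator_of_notMem (show ξ ∉ {ξ : E | ‖ξ‖ ∈ Set.Ioc a b} from h),
            hf, Set.indicator_of_notMem h, ENNReal.ofReal_zero]
    _ = ENNReal.ofReal (∫ ξ : E, f ‖ξ‖) := (ofReal_integral_eq_lintegral_ofReal hint hnn).symm
    _ = ENNReal.ofReal ((n:ℝ) * (volume (Metric.ball (0:E) 1)).toReal *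
          ∫ y in Set.Ioi (0:ℝ), y ^ (n - 1) • f y) := by
        rw [integral_fun_norm_addHaar (volume : Measure E) f, hdim]
        rw [nsmul_eq_mul, smul_eq_mul, mul_assoc]
        rfl
    _ = ENNReal.ofReal (((n : ℝ) * (volume (Metric.ball (0:E) 1)).toReal / (2*r+n))
        * (b ^ (2*r+n) - a ^ (2*r+n))) := by
        congr 1
        have h1 : ∫ y in Set.Ioi (0:ℝ), y ^ (n - 1) • f y
            = ∫ y in Set.Ioc a b, y ^ (2*r + n - 1) := by
          have heq : ∀ y : ℝ, y ^ (n-1) • f y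
              = (Set.Ioc a b).indicator (fun y => y ^ (n-1) * y^(2*r)) y := by
            intro y
            by_cases h : y ∈ Set.Ioc a b
            · rw [hf, Set.indicator_of_mem h, Set.indicator_of_mem h, smul_eq_mul]
            · rw [hf, Set.indicator_of_notMem h, Set.indicator_of_notMem h, smul_zero]
          rw [integral_congr_ae (Filter.Eventually.of_forall fun y => heq y),
            setIntegral_indicator measurableSet_Ioc]
          have hss : Set.Ioi (0:ℝ) ∩ Set.Ioc a b = Set.Ioc a b := by
            apply Set.inter_eq_self_of_subset_right
            intro y hy
            exact lt_trans ha hy.1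
          rw [hss]
          apply setIntegral_congr_fun measurableSet_Ioc
          intro y hy
          have hy0 : 0 < y := lt_trans ha hy.1
          show y ^ (n-1) * y ^ (2*r) = y ^ (2*r + n - 1)
          rw [← Real.rpow_natCast y (n-1), ← Real.rpow_add hy0]
          congr 1
          have h2 : ((n - 1 : ℕ) : ℝ) = (n : ℝ) - 1 := by
            have h3 : (1:ℕ) ≤ n := hn
            push_cast [h3]
            ring
          rw [h2]; ring
        rw [h1, ← intervalIntegral.integral_of_le hab,
          integral_rpow (Or.inl (by linarith))]
        have h4 : 2*r + n - 1 + 1 = 2*r + n := by ring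
        rw [h4]
        field_simp

set_option maxHeartbeats 1600000 in
theorem stmt17_aux (n : ℕ) (hn : 1 ≤ n) (r : ℝ) (hlow : -(n : ℝ) / 2 < r) :
    ∃ g : EuclideanSpace ℝ (Fin n) → ℂ, Measurable g ∧
      MemLp g 2 (volume : Measure (EuclideanSpace ℝ (Fin n))) ∧
      0 < Pminus n g r ∧ Pminus n g r < Pplus n g r ∧ Pplus n g r < ⊤ ∧
      Pminus n g r = ENNReal.ofReal ((2 : ℝ) ^ (-(2 * r + (n : ℝ)))) * Pplus n g r ∧
      ¬ ∃ L : ℝ≥0∞, Tendsto (fun ρ : ℝ => decayFun n g r ρ) (𝓝[>] (0 : ℝ)) (𝓝 L) := by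
  classical
  have hn' : (1:ℝ) ≤ n := by exact_mod_cast hn
  set E := EuclideanSpace ℝ (Fin n) with hE
  obtain ⟨α, hα_def⟩ : ∃ α : ℝ, α = 2 * r + (n : ℝ) := ⟨_, rfl⟩
  have hα : 0 < α := by rw [hα_def]; linarith
  obtain ⟨b, hb_def⟩ : ∃ b : ℝ, b = (2:ℝ) ^ (-α) := ⟨_, rfl⟩
  have hb0 : 0 < b := by rw [hb_def]; exact Real.rpow_pos_of_pos two_pos _
  have hb1 : b < 1 := by
    rw [hb_def]
    exact Real.rpow_lt_one_of_one_lt_of_neg one_lt_two (neg_lt_zero.2 hα)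
  obtain ⟨u, hu_def⟩ : ∃ u : ℕ → ℝ, u = fun m => (2:ℝ)⁻¹ ^ m := ⟨_, rfl⟩
  have hu0 : ∀ m, 0 < u m := by
    intro m; rw [hu_def]; exact pow_pos (by norm_num) m
  have hu_anti : ∀ p q : ℕ, p ≤ q → u q ≤ u p := by
    intro p q h; rw [hu_def]
    exact pow_le_pow_of_le_one (by norm_num) (by norm_num) h
  have hu_strict : ∀ p q : ℕ, p < q → u q < u p := by
    intro p q h; rw [hu_def]
    exact pow_lt_pow_right_of_lt_one₀ (by norm_num) (by norm_num) h
  have hu00 : u 0 = 1 := by rw [hu_def]; exact pow_zero _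
  have hupow : ∀ m : ℕ, (u m) ^ α = b ^ m := by
    intro m
    rw [hu_def, hb_def]
    show ((2:ℝ)⁻¹ ^ m) ^ α = ((2:ℝ) ^ (-α)) ^ m
    rw [← Real.rpow_natCast (2:ℝ)⁻¹ m, ← Real.rpow_natCast ((2:ℝ) ^ (-α)) m,
      ← Real.rpow_mul (by norm_num : (0:ℝ) ≤ 2⁻¹), ← Real.rpow_mul (by norm_num : (0:ℝ) ≤ 2),
      Real.inv_rpow (by norm_num : (0:ℝ) ≤ 2), ← Real.rpow_neg (by norm_num : (0:ℝ) ≤ 2)]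
    congr 1
    ring
  obtain ⟨S, hS_def⟩ : ∃ S : Set ℝ, S = ⋃ k : ℕ, Set.Ioc (u (2*k+1)) (u (2*k)) := ⟨_, rfl⟩
  have hSmeas : MeasurableSet S := by
    rw [hS_def]; exact MeasurableSet.iUnion fun k => measurableSet_Ioc
  obtain ⟨W, hW_def⟩ : ∃ W : Set E, W = {ξ : E | ‖ξ‖ ∈ S} := ⟨_, rfl⟩
  have hWmeas : MeasurableSet W := by rw [hW_def]; exact measurable_norm hSmeas
  obtain ⟨g, hg_def⟩ : ∃ g : E → ℂ, g = W.piecewise (fun ξ => ((‖ξ‖ ^ r : ℝ) : ℂ)) 0 := ⟨_, rfl⟩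
  have hg_meas : Measurable g := by
    rw [hg_def]
    exact Measurable.piecewise hWmeas
      ((Complex.continuous_ofReal.measurable).comp (measurable_norm.pow_const r))
      measurable_const
  -- pointwise identity
  have hpoint : ∀ ξ : E, ENNReal.ofReal (‖g ξ‖^2)
      = W.indicator (fun ξ => ENNReal.ofReal (‖ξ‖ ^ (2*r))) ξ := by
    intro ξ
    by_cases h : ξ ∈ W
    · rw [Set.indicator_of_mem h, hg_def, Set.piecewise_eq_of_mem _ _ _ h]
      rw [Complex.norm_real, Real.norm_eq_abs,
        abs_of_nonneg (Real.rpow_nonneg (norm_nonneg ξ) r),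
        ← Real.rpow_natCast (‖ξ‖ ^ r) 2, ← Real.rpow_mul (norm_nonneg ξ)]
      congr 2
      push_cast; ring
    · rw [Set.indicator_of_notMem h, hg_def, Set.piecewise_eq_of_notMem _ _ _ h]
      simp
  obtain ⟨F, hF_def⟩ : ∃ F : ℝ → ℝ≥0∞,
      F = fun ρ => ∫⁻ ξ in {ξ : E | ‖ξ‖ ≤ ρ}, ENNReal.ofReal (‖g ξ‖^2) := ⟨_, rfl⟩
  have hDF : ∀ ρ : ℝ, decayFun n g r ρ = ENNReal.ofReal (ρ ^ (-α)) * F ρ := by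
    intro ρ
    rw [hF_def, hα_def]
    rfl
  -- constants
  obtain ⟨c, hc_def⟩ : ∃ c : ℝ,
      c = (n : ℝ) * (volume (Metric.ball (0:E) 1)).toReal / α := ⟨_, rfl⟩
  have hωpos : 0 < (volume (Metric.ball (0:E) 1)).toReal :=
    ENNReal.toReal_pos (Metric.measure_ball_pos volume 0 one_pos).ne' measure_ball_lt_top.ne
  have hc : 0 < c := by rw [hc_def]; exact div_pos (mul_pos (by linarith) hωpos) hα
  have hb2 : b^2 < 1 := by nlinarith
  obtain ⟨κ, hκ_def⟩ : ∃ κ : ℝ, κ = c * (1-b) / (1 - b^2) := ⟨_, rfl⟩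
  have hκ : 0 < κ := by
    rw [hκ_def]; exact div_pos (mul_pos hc (by linarith)) (by nlinarith)
  have hκc : c = κ * (1+b) := by
    rw [hκ_def, div_mul_eq_mul_div, eq_div_iff (by nlinarith : (1:ℝ) - b ^ 2 ≠ 0)]
    ring
  have hα' : (0:ℝ) < 2*r + n := hα_def ▸ hα
  -- annuli
  obtain ⟨A, hA_def⟩ : ∃ A : ℕ → Set E,
      A = fun m => {ξ : E | ‖ξ‖ ∈ Set.Ioc (u (2*m+1)) (u (2*m))} := ⟨_, rfl⟩
  have hAmeas : ∀ m, MeasurableSet (A m) := by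
    intro m; rw [hA_def]; exact measurable_norm measurableSet_Ioc
  have hAval : ∀ m, ∫⁻ ξ in A m, ENNReal.ofReal (‖ξ‖ ^ (2*r))
      = ENNReal.ofReal ((c*(1-b)) * b^(2*m)) := by
    intro m
    rw [hA_def]
    rw [annulus_lintegral n hn r hα' (u (2*m+1)) (u (2*m)) (hu0 _)
      (hu_strict (2*m) (2*m+1) (by omega)).le]
    rw [← hα_def, ← hc_def, hupow, hupow]
    congr 1
    ring
  -- master formula
  have hmaster : ∀ (k : ℕ) (ρ : ℝ), u (2*k+2) < ρ → ρ ≤ u (2*k) →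
      F ρ = ENNReal.ofReal (κ * b^(2*k+2)) +
        ∫⁻ ξ in {ξ : E | ‖ξ‖ ∈ Set.Ioc (u (2*k+1)) ρ}, ENNReal.ofReal (‖ξ‖ ^ (2*r)) := by
    intro k ρ h1 h2
    have hset : W ∩ {ξ : E | ‖ξ‖ ≤ ρ} =
        (⋃ j : ℕ, A (k+1+j)) ∪ {ξ : E | ‖ξ‖ ∈ Set.Ioc (u (2*k+1)) ρ} := by
      ext ξ
      simp only [hW_def, hS_def, hA_def, Set.mem_inter_iff, Set.mem_setOf_eq, Set.mem_iUnion,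
        Set.mem_union, Set.mem_Ioc]
      constructor
      · rintro ⟨⟨m, hm1, hm2⟩, hle⟩
        rcases le_or_gt (k+1) m with hm | hm
        · left
          exact ⟨m - (k+1), by rw [show k+1+(m-(k+1)) = m from by omega]; exact ⟨hm1, hm2⟩⟩
        · right
          exact ⟨lt_of_le_of_lt (hu_anti (2*m+1) (2*k+1) (by omega)) hm1, hle⟩
      · rintro (⟨j, hj1, hj2⟩ | ⟨hx1, hx2⟩)
        · refine ⟨⟨k+1+j, hj1, hj2⟩, ?_⟩
          exact le_of_lt (lt_of_le_of_lt (le_trans hj2 (hu_anti _ _ (by omega))) h1)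
        · exact ⟨⟨k, hx1, le_trans hx2 h2⟩, hx2⟩
    have hdisjP : Disjoint (⋃ j : ℕ, A (k+1+j)) {ξ : E | ‖ξ‖ ∈ Set.Ioc (u (2*k+1)) ρ} := by
      rw [Set.disjoint_left]
      rintro ξ hξ hξP
      obtain ⟨j, hj⟩ := Set.mem_iUnion.mp hξ
      rw [hA_def] at hj
      have h3 : ‖ξ‖ ≤ u (2*k+1) := le_trans hj.2 (hu_anti _ _ (by omega))
      exact absurd hξP.1 (not_lt.2 h3)
    have hpairA : ∀ p q : ℕ, p < q → Disjoint (A p) (A q) := by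
      intro p q hpq
      rw [Set.disjoint_left, hA_def]
      intro x hxp hxq
      have : ‖x‖ ≤ u (2*p+1) := le_trans hxq.2 (hu_anti _ _ (by omega))
      exact absurd hxp.1 (not_lt.2 this)
    have hpair : Pairwise (Function.onFun Disjoint fun j : ℕ => A (k+1+j)) := by
      intro i j hij
      rcases hij.lt_or_gt with h | h
      · exact hpairA _ _ (by omega)
      · exact (hpairA _ _ (by omega)).symm
    have htsum : (∑' j : ℕ, ENNReal.ofReal ((c*(1-b)) * b^(2*(k+1+j))))
        = ENNReal.ofReal (κ * b^(2*k+2)) := by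
      have heq : ∀ j : ℕ, ENNReal.ofReal ((c*(1-b)) * b^(2*(k+1+j)))
          = ENNReal.ofReal (c*(1-b) * b^(2*k+2)) * (ENNReal.ofReal (b^2))^j := by
        intro j
        rw [← ENNReal.ofReal_pow (sq_nonneg b),
          ← ENNReal.ofReal_mul (mul_nonneg (mul_nonneg hc.le (by linarith)) (pow_pos hb0 _).le)]
        congr 1
        rw [show 2*(k+1+j) = (2*k+2) + 2*j from by omega, pow_add, pow_mul]
        ring
      simp_rw [heq]
      rw [ENNReal.tsum_mul_left, ENNReal.tsum_geometric,
        show (1:ℝ≥0∞) - ENNReal.ofReal (b^2) = ENNReal.ofReal (1 - b^2) from by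
          rw [ENNReal.ofReal_sub _ (sq_nonneg b), ENNReal.ofReal_one],
        ← ENNReal.ofReal_inv_of_pos (by nlinarith),
        ← ENNReal.ofReal_mul (mul_nonneg (mul_nonneg hc.le (by linarith)) (pow_pos hb0 _).le)]
      congr 1
      rw [hκ_def]
      ring
    calc F ρ = ∫⁻ ξ in {ξ : E | ‖ξ‖ ≤ ρ},
          W.indicator (fun ξ => ENNReal.ofReal (‖ξ‖ ^ (2*r))) ξ := by
          rw [hF_def]
          exact lintegral_congr hpoint
      _ = ∫⁻ ξ in (W ∩ {ξ : E | ‖ξ‖ ≤ ρ}), ENNReal.ofReal (‖ξ‖ ^ (2*r)) := by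
          rw [lintegral_indicator hWmeas, Measure.restrict_restrict hWmeas]
      _ = ∫⁻ ξ in ((⋃ j : ℕ, A (k+1+j)) ∪ {ξ : E | ‖ξ‖ ∈ Set.Ioc (u (2*k+1)) ρ}),
            ENNReal.ofReal (‖ξ‖ ^ (2*r)) := by rw [hset]
      _ = (∫⁻ ξ in (⋃ j : ℕ, A (k+1+j)), ENNReal.ofReal (‖ξ‖ ^ (2*r))) +
            ∫⁻ ξ in {ξ : E | ‖ξ‖ ∈ Set.Ioc (u (2*k+1)) ρ}, ENNReal.ofReal (‖ξ‖ ^ (2*r)) :=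
          lintegral_union (measurable_norm measurableSet_Ioc) hdisjP
      _ = ENNReal.ofReal (κ * b^(2*k+2)) +
            ∫⁻ ξ in {ξ : E | ‖ξ‖ ∈ Set.Ioc (u (2*k+1)) ρ}, ENNReal.ofReal (‖ξ‖ ^ (2*r)) := by
          rw [lintegral_iUnion (fun j => hAmeas _) hpair]
          simp_rw [hAval]
          rw [htsum]
  -- gap and annulus formulas
  have hgap : ∀ (k : ℕ) (ρ : ℝ), u (2*k+2) < ρ → ρ ≤ u (2*k+1) →
      F ρ = ENNReal.ofReal (κ * b^(2*k+2)) := by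
    intro k ρ h1 h2
    rw [hmaster k ρ h1 (le_trans h2 (hu_anti _ _ (by omega)))]
    rw [show Set.Ioc (u (2*k+1)) ρ = ∅ from Set.Ioc_eq_empty (not_lt.2 h2)]
    simp
  have hann : ∀ (k : ℕ) (ρ : ℝ), u (2*k+1) < ρ → ρ ≤ u (2*k) →
      F ρ = ENNReal.ofReal (κ * b^(2*k+2) + c * (ρ ^ α - b^(2*k+1))) := by
    intro k ρ h1 h2
    have hρ0 : 0 < ρ := lt_trans (hu0 _) h1
    have hge : b^(2*k+1) ≤ ρ ^ α := by
      rw [← hupow]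
      exact Real.rpow_le_rpow (hu0 _).le h1.le hα.le
    rw [hmaster k ρ (lt_trans (hu_strict _ _ (by omega)) h1) h2]
    rw [annulus_lintegral n hn r hα' (u (2*k+1)) ρ (hu0 _) h1.le]
    rw [← hα_def, ← hc_def, hupow]
    rw [← ENNReal.ofReal_add (mul_nonneg hκ.le (pow_pos hb0 _).le)
      (mul_nonneg hc.le (sub_nonneg.2 hge))]
  -- decayFun formulas
  have hDgap : ∀ (k : ℕ) (ρ : ℝ), u (2*k+2) < ρ → ρ ≤ u (2*k+1) →
      decayFun n g r ρ = ENNReal.ofReal (ρ ^ (-α) * (κ * b^(2*k+2))) := by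
    intro k ρ h1 h2
    have hρ0 : 0 < ρ := lt_trans (hu0 _) h1
    rw [hDF, hgap k ρ h1 h2, ← ENNReal.ofReal_mul (Real.rpow_nonneg hρ0.le _)]
  have hDann : ∀ (k : ℕ) (ρ : ℝ), u (2*k+1) < ρ → ρ ≤ u (2*k) →
      decayFun n g r ρ =
        ENNReal.ofReal (ρ ^ (-α) * (κ * b^(2*k+2) + c * (ρ ^ α - b^(2*k+1)))) := by
    intro k ρ h1 h2
    have hρ0 : 0 < ρ := lt_trans (hu0 _) h1
    rw [hDF, hann k ρ h1 h2, ← ENNReal.ofReal_mul (Real.rpow_nonneg hρ0.le _)]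
  -- endpoint values
  have hDtop : ∀ k : ℕ, decayFun n g r (u (2*k)) = ENNReal.ofReal κ := by
    intro k
    rw [hDann k (u (2*k)) (hu_strict _ _ (by omega)) le_rfl]
    congr 1
    rw [Real.rpow_neg (hu0 _).le, hupow, hκc]
    have hbk : (0:ℝ) < b^(2*k) := pow_pos hb0 _
    have hpow : b^(2*k+2) = b^(2*k) * b^2 := by rw [pow_add]
    have hpow2 : b^(2*k+1) = b^(2*k) * b := by rw [pow_add, pow_one]
    rw [hpow, hpow2]
    field_simp
    ring
  have hDbot : ∀ k : ℕ, decayFun n g r (u (2*k+1)) = ENNReal.ofReal (b * κ) := by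
    intro k
    rw [hDgap k (u (2*k+1)) (hu_strict _ _ (by omega)) le_rfl]
    congr 1
    rw [Real.rpow_neg (hu0 _).le, hupow]
    have hbk : (0:ℝ) < b^(2*k+1) := pow_pos hb0 _
    have hpow : b^(2*k+2) = b^(2*k+1) * b := by rw [show 2*k+2 = (2*k+1)+1 from rfl, pow_succ]
    rw [hpow]
    field_simp
  -- global bounds
  have hbound : ∀ ρ : ℝ, 0 < ρ → ρ ≤ 1 →
      ENNReal.ofReal (b * κ) ≤ decayFun n g r ρ ∧ decayFun n g r ρ ≤ ENNReal.ofReal κ := by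
    intro ρ hρ hρ1
    obtain ⟨k, h1, h2⟩ : ∃ k, u (2*k+2) < ρ ∧ ρ ≤ u (2*k) := by
      obtain ⟨m, hm⟩ : ∃ m : ℕ, (2:ℝ)⁻¹ ^ m < ρ :=
        exists_pow_lt_of_lt_one hρ (by norm_num : (2:ℝ)⁻¹ < 1)
      have hum : u m < ρ := by rw [hu_def]; exact hm
      have hex : ∃ k, u (2*k+2) < ρ := ⟨m, lt_of_le_of_lt (hu_anti _ _ (by omega)) hum⟩
      refine ⟨Nat.find hex, Nat.find_spec hex, ?_⟩
      rcases Nat.eq_zero_or_pos (Nat.find hex) with h0 | h0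
      · rw [h0]
        simpa [hu00] using hρ1
      · obtain ⟨j, hj⟩ := Nat.exists_eq_add_of_lt h0
        have hmin := Nat.find_min hex (m := j) (by omega)
        push_neg at hmin
        rw [show Nat.find hex = j + 1 from by omega, show 2*(j+1) = 2*j+2 from by omega]
        exact hmin
    have hρα : 0 < ρ ^ α := Real.rpow_pos_of_pos hρ _
    have hρnα : ρ ^ (-α) = (ρ ^ α)⁻¹ := Real.rpow_neg hρ.le α
    by_cases hcase : ρ ≤ u (2*k+1)
    · -- gap
      have e1 : ρ ^ α ≤ b^(2*k+1) := by
        rw [← hupow]; exact Real.rpow_le_rpow hρ.le hcase hα.le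
      have e2 : b^(2*k+2) ≤ ρ ^ α := by
        rw [← hupow]; exact Real.rpow_le_rpow (hu0 _).le h1.le hα.le
      rw [hDgap k ρ h1 hcase]
      constructor
      · apply ENNReal.ofReal_le_ofReal
        rw [hρnα, inv_mul_eq_div, le_div_iff₀ hρα]
        have hpow : b^(2*k+2) = b^(2*k+1) * b := by rw [show 2*k+2 = (2*k+1)+1 from rfl, pow_succ]
        nlinarith [mul_le_mul_of_nonneg_left e1 (mul_pos hb0 hκ).le]
      · apply ENNReal.ofReal_le_ofReal
        rw [hρnα, inv_mul_eq_div, div_le_iff₀ hρα]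
        exact mul_le_mul_of_nonneg_left e2 hκ.le
    · -- annulus
      push_neg at hcase
      have e1 : b^(2*k+1) < ρ ^ α := by
        rw [← hupow]; exact Real.rpow_lt_rpow (hu0 _).le hcase hα
      have e2 : ρ ^ α ≤ b^(2*k) := by
        rw [← hupow]; exact Real.rpow_le_rpow hρ.le h2 hα.le
      rw [hDann k ρ hcase h2]
      have key1 : (0:ℝ) ≤ κ * (ρ ^ α - b^(2*k+1)) :=
        mul_nonneg hκ.le (sub_nonneg.2 e1.le)
      have key2 : (0:ℝ) ≤ κ * b * (b^(2*k) - ρ ^ α) :=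
        mul_nonneg (mul_pos hκ hb0).le (sub_nonneg.2 e2)
      constructor
      · apply ENNReal.ofReal_le_ofReal
        rw [hρnα, inv_mul_eq_div, le_div_iff₀ hρα, hκc,
          show b^(2*k+2) = b^(2*k+1) * b from by rw [show 2*k+2 = (2*k+1)+1 from rfl, pow_succ]]
        linarith [key1]
      · apply ENNReal.ofReal_le_ofReal
        rw [hρnα, inv_mul_eq_div, div_le_iff₀ hρα, hκc,
          show b^(2*k+2) = b^(2*k+1) * b from by rw [show 2*k+2 = (2*k+1)+1 from rfl, pow_succ],
          show b^(2*k+1) = b^(2*k) * b from by rw [show 2*k+1 = (2*k)+1 from rfl, pow_succ]]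
        linarith [key2]
  -- sequences
  have hseq_top : Tendsto (fun k : ℕ => u (2*k)) atTop (𝓝[>] (0:ℝ)) := by
    apply tendsto_nhdsWithin_of_tendsto_nhds_of_eventually_within
    · have heq : (fun k : ℕ => u (2*k)) = fun k : ℕ => (((2:ℝ)⁻¹)^2)^k := by
        funext k; rw [hu_def]; exact pow_mul _ 2 k
      rw [heq]
      exact tendsto_pow_atTop_nhds_zero_of_lt_one (by norm_num) (by norm_num)
    · exact Eventually.of_forall fun k => hu0 _
  have hseq_bot : Tendsto (fun k : ℕ => u (2*k+1)) atTop (𝓝[>] (0:ℝ)) := by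
    apply tendsto_nhdsWithin_of_tendsto_nhds_of_eventually_within
    · have heq : (fun k : ℕ => u (2*k+1)) = fun k : ℕ => (((2:ℝ)⁻¹)^2)^k * 2⁻¹ := by
        funext k; rw [hu_def]
        show (2:ℝ)⁻¹ ^ (2*k+1) = (((2:ℝ)⁻¹)^2)^k * 2⁻¹
        rw [pow_succ, pow_mul]
      rw [heq]
      simpa using
        (tendsto_pow_atTop_nhds_zero_of_lt_one
          (by norm_num : (0:ℝ) ≤ ((2:ℝ)⁻¹)^2) (by norm_num)).mul_const (2⁻¹:ℝ)
    · exact Eventually.of_forall fun k => hu0 _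
  have hIoc : Set.Ioc (0:ℝ) 1 ∈ 𝓝[>] (0:ℝ) :=
    Ioc_mem_nhdsGT_of_mem ⟨le_refl 0, one_pos⟩
  -- limsup and liminf values
  have hPplus : Pplus n g r = ENNReal.ofReal κ := by
    apply le_antisymm
    · apply limsup_le_of_le (by isBoundedDefault)
      filter_upwards [hIoc] with ρ hρ
      exact (hbound ρ hρ.1 hρ.2).2
    · apply le_limsup_of_frequently_le _ (by isBoundedDefault)
      apply hseq_top.frequently
      exact Frequently.of_forall fun k => (hDtop k).ge
  have hPminus : Pminus n g r = ENNReal.ofReal (b * κ) := by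
    apply le_antisymm
    · apply liminf_le_of_frequently_le _ (by isBoundedDefault)
      apply hseq_bot.frequently
      exact Frequently.of_forall fun k => (hDbot k).le
    · apply le_liminf_of_le (by isBoundedDefault)
      filter_upwards [hIoc] with ρ hρ
      exact (hbound ρ hρ.1 hρ.2).1
  -- Memℒp
  have hWsub : W ⊆ {ξ : E | ‖ξ‖ ≤ u 0} := by
    intro ξ hξ
    rw [hW_def] at hξ
    have hξ' : ‖ξ‖ ∈ S := hξ
    rw [hS_def] at hξ'
    obtain ⟨m, hm⟩ := Set.mem_iUnion.mp hξ'
    exact le_trans hm.2 (hu_anti _ _ (by omega))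
  have htotal : ∫⁻ ξ : E, ENNReal.ofReal (‖g ξ‖^2) < ⊤ := by
    have hFu0 : F (u 0) < ⊤ := by
      rw [hann 0 (u 0) (hu_strict _ _ (by omega)) le_rfl]
      exact ENNReal.ofReal_lt_top
    have heq : ∫⁻ ξ : E, ENNReal.ofReal (‖g ξ‖^2) = F (u 0) := by
      calc ∫⁻ ξ : E, ENNReal.ofReal (‖g ξ‖^2)
          = ∫⁻ ξ : E, W.indicator (fun ξ => ENNReal.ofReal (‖ξ‖ ^ (2*r))) ξ :=
            lintegral_congr hpoint
        _ = ∫⁻ ξ in W, ENNReal.ofReal (‖ξ‖ ^ (2*r)) := lintegral_indicator hWmeas _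
        _ = ∫⁻ ξ in (W ∩ {ξ : E | ‖ξ‖ ≤ u 0}), ENNReal.ofReal (‖ξ‖ ^ (2*r)) := by
            rw [Set.inter_eq_self_of_subset_left hWsub]
        _ = ∫⁻ ξ in {ξ : E | ‖ξ‖ ≤ u 0},
              W.indicator (fun ξ => ENNReal.ofReal (‖ξ‖ ^ (2*r))) ξ := by
            rw [lintegral_indicator hWmeas, Measure.restrict_restrict hWmeas]
        _ = F (u 0) := by
            rw [hF_def]
            exact (lintegral_congr hpoint).symm
    rwa [heq]
  have hmem : MemLp g 2 (volume : Measure E) := by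
    rw [memLp_two_iff_integrable_sq_norm hg_meas.aestronglyMeasurable]
    refine ⟨((hg_meas.norm.pow_const 2).aestronglyMeasurable), ?_⟩
    rw [hasFiniteIntegral_iff_ofReal (Eventually.of_forall fun ξ => by positivity)]
    exact htotal
  -- conclusions
  have hlt : Pminus n g r < Pplus n g r := by
    rw [hPminus, hPplus]
    exact (ENNReal.ofReal_lt_ofReal_iff hκ).2 (by linarith [mul_pos hκ (sub_pos.2 hb1)])
  refine ⟨g, hg_meas, hmem, ?_, hlt, ?_, ?_, ?_⟩
  · rw [hPminus]
    exact ENNReal.ofReal_pos.2 (mul_pos hb0 hκ)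
  · rw [hPplus]; exact ENNReal.ofReal_lt_top
  · rw [hPminus, hPplus, ← hα_def, ← hb_def]
    exact ENNReal.ofReal_mul hb0.le
  · rintro ⟨L, hL⟩
    have h1 : Pminus n g r = L := hL.liminf_eq
    have h2 : Pplus n g r = L := hL.limsup_eq
    rw [h1, h2] at hlt
    exact lt_irrefl _ hlt


theorem stmt17 (n : ℕ) (hn : 1 ≤ n) (r : ℝ) (hlow : -(n : ℝ) / 2 < r) :
    ∃ g : EuclideanSpace ℝ (Fin n) → ℂ, Measurable g ∧
      MemLp g 2 (volume : Measure (EuclideanSpace ℝ (Fin n))) ∧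
      0 < Pminus n g r ∧ Pminus n g r < Pplus n g r ∧ Pplus n g r < ⊤ ∧
      Pminus n g r = ENNReal.ofReal ((2 : ℝ) ^ (-(2 * r + (n : ℝ)))) * Pplus n g r ∧
      ¬ ∃ L : ℝ≥0∞, Tendsto (fun ρ : ℝ => decayFun n g r ρ) (𝓝[>] (0 : ℝ)) (𝓝 L) := by
  exact stmt17_aux n hn r hlow
end
end

section
/- For every n ≥ 1 and every r₀ ∈ (−n/2, ∞), there exists a measurable g ∈ L²(ℝⁿ) (for example g(ξ) = |ξ|^{r₀} log|ξ| for 0 < |ξ| ≤ 1/2 and g(ξ) = 0 otherwise) such that the upper and lower decay characters satisfy r(g)₊ = r(g)₋ = r₀, while P_{r₀}(g)₋ = P_{r₀}(g)₊ = +∞. In particular the supremum defining r(g)₊ is not attained, and there is no r ∈ ℝ with 0 < P_r(g)₋ ≤ P_r(g)₊ < ∞: the decay character of g does not exist even though r(g)₊ = r(g)₋. -/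
open MeasureTheory Filter Topology
open scoped ENNReal NNReal

noncomputable section

/-- Upper decay character `r(g)₊ = sup {r : P_r(g)₊ < ∞}`, as an extended real. -/
def rPlus (n : ℕ) (g : EuclideanSpace ℝ (Fin n) → ℂ) : EReal :=
  sSup {x : EReal | ∃ r : ℝ, x = (r : EReal) ∧ Pplus n g r < ⊤}

/-- Lower decay character `r(g)₋ = inf {r : P_r(g)₋ > 0}`, as an extended real
(with `inf ∅ = +∞`). -/
def rMinus (n : ℕ) (g : EuclideanSpace ℝ (Fin n) → ℂ) : EReal :=
  sInf {x : EReal | ∃ r : ℝ, x = (r : EReal) ∧ 0 < Pminus n g r}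

open Metric


lemma annuli_cover {E : Type*} [NormedAddCommGroup E] {ρ : ℝ} (hρ : 0 < ρ) :
    closedBall (0:E) ρ \ {0} ⊆
      ⋃ k : ℕ, (closedBall (0:E) (ρ * 2⁻¹ ^ k) \ closedBall 0 (ρ * 2⁻¹ ^ (k+1))) := by
  rintro ξ ⟨hξ, hξ0⟩
  rw [mem_closedBall_zero_iff] at hξ
  have hξpos : 0 < ‖ξ‖ := norm_pos_iff.mpr (by simpa using hξ0)
  have hex : ∃ k : ℕ, ρ * 2⁻¹ ^ (k+1) < ‖ξ‖ := by
    obtain ⟨m, hm⟩ := exists_pow_lt_of_lt_one (div_pos hξpos hρ) (by norm_num : (2:ℝ)⁻¹ < 1)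
    refine ⟨m, ?_⟩
    have : ρ * 2⁻¹ ^ (m+1) ≤ ρ * 2⁻¹ ^ m := by
      apply mul_le_mul_of_nonneg_left (pow_le_pow_of_le_one (by norm_num) (by norm_num) (by omega)) hρ.le
    calc ρ * 2⁻¹ ^ (m+1) ≤ ρ * 2⁻¹ ^ m := this
      _ < ρ * (‖ξ‖ / ρ) := by exact mul_lt_mul_of_pos_left hm hρ
      _ = ‖ξ‖ := by field_simp
  classical
  have hk : ρ * 2⁻¹ ^ (Nat.find hex + 1) < ‖ξ‖ := Nat.find_spec hex
  have hk2 : ‖ξ‖ ≤ ρ * 2⁻¹ ^ (Nat.find hex) := by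
    rcases Nat.eq_zero_or_pos (Nat.find hex) with h0 | hpos
    · rw [h0]; simpa using hξ
    · obtain ⟨m, hm⟩ := Nat.exists_eq_succ_of_ne_zero hpos.ne'
      have := Nat.find_min hex (by omega : m < Nat.find hex)
      push_neg at this
      rw [hm]
      simpa using this
  refine Set.mem_iUnion.mpr ⟨Nat.find hex, ?_, ?_⟩
  · exact mem_closedBall_zero_iff.mpr hk2
  · intro h
    exact absurd (mem_closedBall_zero_iff.mp h) (not_le.mpr hk)

lemma annuli_disjoint {E : Type*} [NormedAddCommGroup E] {ρ : ℝ} :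
    Pairwise (Function.onFun Disjoint
      (fun k : ℕ => closedBall (0:E) (ρ * 2⁻¹ ^ k) \ closedBall 0 (ρ * 2⁻¹ ^ (k+1)))) := by
  have key : ∀ j k : ℕ, j < k → Disjoint
      (closedBall (0:E) (ρ * 2⁻¹ ^ j) \ closedBall 0 (ρ * 2⁻¹ ^ (j+1)))
      (closedBall (0:E) (ρ * 2⁻¹ ^ k) \ closedBall 0 (ρ * 2⁻¹ ^ (k+1))) := by
    intro j k hjk
    rw [Set.disjoint_left]
    rintro ξ ⟨_, hj2⟩ ⟨hk1, _⟩
    apply hj2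
    rw [mem_closedBall_zero_iff] at hk1 ⊢
    rcases le_or_gt 0 ρ with hρ | hρ
    · refine hk1.trans ?_
      exact mul_le_mul_of_nonneg_left (pow_le_pow_of_le_one (by norm_num) (by norm_num) (by omega)) hρ
    · exfalso
      nlinarith [norm_nonneg ξ, pow_pos (by norm_num : (0:ℝ) < 2⁻¹) k]
  intro j k hjk
  rcases lt_or_gt_of_ne hjk with h | h
  · exact key j k h
  · exact (key k j h).symm
lemma lint_rpow_le (n : ℕ) (hn : 1 ≤ n) (b : ℝ) (hb : -(n:ℝ) < b) :
    ∃ C : ℝ≥0∞, C ≠ ⊤ ∧ ∀ ρ : ℝ, 0 < ρ →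
      ∫⁻ ξ in closedBall (0 : EuclideanSpace ℝ (Fin n)) ρ, ENNReal.ofReal (‖ξ‖ ^ b) ≤
        C * ENNReal.ofReal (ρ ^ (b + n)) := by
  haveI : Nonempty (Fin n) := ⟨⟨0, hn⟩⟩
  set E := EuclideanSpace ℝ (Fin n)
  set B : ℝ≥0∞ := volume (ball (0:E) 1) with hB
  have hBne : B ≠ ⊤ := measure_ball_lt_top.ne
  have hbn : 0 < b + n := by linarith
  set K : ℝ := max 1 ((2:ℝ) ^ (-b)) with hK
  have hK1 : (1:ℝ) ≤ K := le_max_left _ _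
  have hK0 : 0 ≤ K := by linarith
  set q : ℝ≥0∞ := ENNReal.ofReal ((2:ℝ)⁻¹ ^ (b + (n:ℝ))) with hq
  have hqlt : q < 1 := by
    rw [hq, ← ENNReal.ofReal_one]
    apply ENNReal.ofReal_lt_ofReal_iff_of_nonneg (Real.rpow_nonneg (by norm_num) _) |>.mpr
    exact Real.rpow_lt_one (by norm_num) (by norm_num) hbn
  have hsub : (1:ℝ≥0∞) - q ≠ 0 := (tsub_pos_of_lt hqlt).ne'
  refine ⟨ENNReal.ofReal K * B * (1 - q)⁻¹, ?_, ?_⟩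
  · exact ENNReal.mul_ne_top (ENNReal.mul_ne_top ENNReal.ofReal_ne_top hBne)
      (ENNReal.inv_ne_top.mpr hsub)
  intro ρ hρ
  have key : ∀ k : ℕ,
      ∫⁻ ξ in (closedBall (0:E) (ρ * 2⁻¹ ^ k) \ closedBall 0 (ρ * 2⁻¹ ^ (k+1))),
        ENNReal.ofReal (‖ξ‖ ^ b) ≤ ENNReal.ofReal (K * ρ ^ (b + (n:ℝ))) * B * q ^ k := by
    intro k
    set s : ℝ := ρ * 2⁻¹ ^ k with hs
    have hspos : 0 < s := by positivity
    have hpt : ∀ ξ : E, ξ ∈ (closedBall (0:E) s \ closedBall 0 (ρ * 2⁻¹ ^ (k+1))) →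
        ENNReal.ofReal (‖ξ‖ ^ b) ≤ ENNReal.ofReal (K * s ^ b) := by
      rintro ξ ⟨h1, h2⟩
      rw [mem_closedBall_zero_iff] at h1
      have h2' : ρ * 2⁻¹ ^ (k+1) < ‖ξ‖ := by
        by_contra hc
        exact h2 (mem_closedBall_zero_iff.mpr (not_lt.mp hc))
      have hhalf : ρ * 2⁻¹ ^ (k+1) = s * 2⁻¹ := by rw [hs]; ring
      apply ENNReal.ofReal_le_ofReal
      rcases le_or_gt 0 b with hb0 | hb0
      · calc ‖ξ‖ ^ b ≤ s ^ b := Real.rpow_le_rpow (norm_nonneg _) h1 hb0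
          _ ≤ K * s ^ b := le_mul_of_one_le_left (Real.rpow_nonneg hspos.le _) hK1
      · have hlow : 0 < s * 2⁻¹ := by positivity
        calc ‖ξ‖ ^ b ≤ (s * 2⁻¹) ^ b := by
              rw [← hhalf]
              exact Real.rpow_le_rpow_of_nonpos (hhalf ▸ hlow) (hhalf ▸ h2'.le) hb0.le
          _ = s ^ b * (2:ℝ)⁻¹ ^ b := Real.mul_rpow hspos.le (by norm_num)
          _ = s ^ b * (2:ℝ) ^ (-b) := by rw [Real.inv_rpow (by norm_num : (0:ℝ) ≤ 2), ← Real.rpow_neg (by norm_num : (0:ℝ) ≤ 2)]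
          _ ≤ s ^ b * K := by
              exact mul_le_mul_of_nonneg_left (le_max_right _ _) (Real.rpow_nonneg hspos.le _)
          _ = K * s ^ b := mul_comm _ _
    calc ∫⁻ ξ in (closedBall (0:E) s \ closedBall 0 (ρ * 2⁻¹ ^ (k+1))), ENNReal.ofReal (‖ξ‖ ^ b)
        ≤ ∫⁻ _ in (closedBall (0:E) s \ closedBall 0 (ρ * 2⁻¹ ^ (k+1))), ENNReal.ofReal (K * s ^ b) :=
          setLIntegral_mono measurable_const hpt
      _ = ENNReal.ofReal (K * s ^ b) * volume (closedBall (0:E) s \ closedBall 0 (ρ * 2⁻¹ ^ (k+1))) := by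
          rw [setLIntegral_const]
      _ ≤ ENNReal.ofReal (K * s ^ b) * volume (closedBall (0:E) s) := by
          exact mul_le_mul_right (measure_mono Set.diff_subset) _
      _ = ENNReal.ofReal (K * s ^ b) * (ENNReal.ofReal (s ^ (Module.finrank ℝ E)) * B) := by
          rw [Measure.addHaar_closedBall _ _ hspos.le]
      _ = ENNReal.ofReal (K * ρ ^ (b + (n:ℝ))) * B * q ^ k := by
          have hfr : Module.finrank ℝ E = n := finrank_euclideanSpace_fin
          rw [hfr, ← ENNReal.ofReal_pow (by positivity : (0:ℝ) ≤ (2:ℝ)⁻¹ ^ (b + (n:ℝ))), ← mul_assoc,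
            ← ENNReal.ofReal_mul (by positivity)]
          have h1 : (s:ℝ) ^ (n:ℕ) = s ^ ((n:ℕ):ℝ) := (Real.rpow_natCast s n).symm
          have h3 : s ^ (b + (n:ℝ)) = ρ ^ (b+(n:ℝ)) * ((2:ℝ)⁻¹ ^ (b+(n:ℝ)))^k := by
            rw [hs, Real.mul_rpow hρ.le (by positivity), ← Real.rpow_natCast ((2:ℝ)⁻¹) k,
              ← Real.rpow_mul (by norm_num), mul_comm (k:ℝ), Real.rpow_mul (by norm_num),
              Real.rpow_natCast]
          have hreal : K * s ^ b * (s:ℝ) ^ (n:ℕ) =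
              (K * ρ ^ (b + (n:ℝ))) * (((2:ℝ)⁻¹ ^ (b+(n:ℝ)))^k) := by
            rw [h1, mul_assoc, ← Real.rpow_add hspos, h3]; ring
          rw [hreal, ENNReal.ofReal_mul (by positivity)]
          ring
  haveI : Nontrivial E := by infer_instance
  calc ∫⁻ ξ in closedBall (0:E) ρ, ENNReal.ofReal (‖ξ‖ ^ b)
      = ∫⁻ ξ in closedBall (0:E) ρ \ {0}, ENNReal.ofReal (‖ξ‖ ^ b) := by
        refine (setLIntegral_congr ?_).symm
        refine diff_ae_eq_self.mpr ?_
        exact measure_mono_null Set.inter_subset_right (measure_singleton 0)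
    _ ≤ ∫⁻ ξ in ⋃ k : ℕ, (closedBall (0:E) (ρ * 2⁻¹ ^ k) \ closedBall 0 (ρ * 2⁻¹ ^ (k+1))),
          ENNReal.ofReal (‖ξ‖ ^ b) := lintegral_mono_set (annuli_cover hρ)
    _ = ∑' k : ℕ, ∫⁻ ξ in (closedBall (0:E) (ρ * 2⁻¹ ^ k) \ closedBall 0 (ρ * 2⁻¹ ^ (k+1))),
          ENNReal.ofReal (‖ξ‖ ^ b) :=
        lintegral_iUnion (fun _ => measurableSet_closedBall.diff measurableSet_closedBall)
          annuli_disjoint _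
    _ ≤ ∑' k : ℕ, ENNReal.ofReal (K * ρ ^ (b + (n:ℝ))) * B * q ^ k := ENNReal.tsum_le_tsum key
    _ = ENNReal.ofReal (K * ρ ^ (b + (n:ℝ))) * B * (1 - q)⁻¹ := by
        rw [ENNReal.tsum_mul_left, ENNReal.tsum_geometric]
    _ = ENNReal.ofReal K * B * (1 - q)⁻¹ * ENNReal.ofReal (ρ ^ (b + (n:ℝ))) := by
        rw [ENNReal.ofReal_mul hK0]; ring

def gfun (n : ℕ) (r₀ : ℝ) : EuclideanSpace ℝ (Fin n) → ℂ := fun ξ =>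
  if 0 < ‖ξ‖ ∧ ‖ξ‖ ≤ 1/2 then
    ((Real.exp (Real.log ‖ξ‖ * r₀) * Real.log ‖ξ‖ : ℝ) : ℂ) else 0

lemma gfun_eq {n : ℕ} {r₀ : ℝ} {ξ : EuclideanSpace ℝ (Fin n)} (h1 : 0 < ‖ξ‖) (h2 : ‖ξ‖ ≤ 1/2) :
    gfun n r₀ ξ = ((‖ξ‖ ^ r₀ * Real.log ‖ξ‖ : ℝ) : ℂ) := by
  rw [gfun, if_pos ⟨h1, h2⟩, Real.rpow_def_of_pos h1]

lemma gfun_measurable (n : ℕ) (r₀ : ℝ) : Measurable (gfun n r₀) := by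
  unfold gfun
  apply Measurable.ite
  · exact (measurableSet_lt measurable_const measurable_norm).inter
      (measurableSet_le measurable_norm measurable_const)
  · exact Complex.measurable_ofReal.comp
      ((Real.measurable_exp.comp ((Real.measurable_log.comp measurable_norm).mul
        measurable_const)).mul (Real.measurable_log.comp measurable_norm))
  · exact measurable_const

lemma gfun_sq {n : ℕ} {r₀ : ℝ} {ξ : EuclideanSpace ℝ (Fin n)} (h1 : 0 < ‖ξ‖) (h2 : ‖ξ‖ ≤ 1/2) :
    ‖gfun n r₀ ξ‖ ^ 2 = ‖ξ‖ ^ (2*r₀) * (Real.log ‖ξ‖)^2 := by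
  rw [gfun_eq h1 h2, Complex.norm_real, Real.norm_eq_abs, abs_mul, mul_pow, sq_abs, sq_abs]
  congr 1
  rw [← Real.rpow_natCast (‖ξ‖ ^ r₀) 2, ← Real.rpow_mul (norm_nonneg ξ)]
  norm_num [mul_comm]

lemma gfun_sq_le (n : ℕ) (r₀ : ℝ) {ε : ℝ} (hε : 0 < ε) (ξ : EuclideanSpace ℝ (Fin n)) :
    ENNReal.ofReal (‖gfun n r₀ ξ‖ ^ 2) ≤
      ENNReal.ofReal ((2/ε)^2) * ENNReal.ofReal (‖ξ‖ ^ (2*r₀ - ε)) := by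
  rw [← ENNReal.ofReal_mul (by positivity)]
  apply ENNReal.ofReal_le_ofReal
  by_cases h : 0 < ‖ξ‖ ∧ ‖ξ‖ ≤ 1/2
  · obtain ⟨h1, h2⟩ := h
    rw [gfun_sq h1 h2]
    set t := ‖ξ‖
    have hinv1 : (1:ℝ) ≤ t⁻¹ := by
      rw [le_inv_comm₀ one_pos h1]; linarith
    have hlog : (Real.log t)^2 ≤ (2/ε)^2 * t ^ (-ε) := by
      have e1 : Real.log t = - Real.log t⁻¹ := by rw [Real.log_inv]; ring
      have e2 : 0 ≤ Real.log t⁻¹ := Real.log_nonneg hinv1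
      have e3 : Real.log t⁻¹ ≤ t⁻¹ ^ (ε/2) / (ε/2) := Real.log_le_rpow_div (by positivity) (by positivity)
      have e4 : (Real.log t⁻¹)^2 ≤ (t⁻¹ ^ (ε/2) / (ε/2))^2 := by
        apply sq_le_sq' _ e3
        nlinarith [Real.rpow_nonneg (inv_nonneg.mpr h1.le) (ε/2), div_nonneg (Real.rpow_nonneg (inv_nonneg.mpr h1.le) (ε/2)) (by positivity : (0:ℝ) ≤ ε/2)]
      have e5 : (t⁻¹ ^ (ε/2) / (ε/2))^2 = (2/ε)^2 * t ^ (-ε) := by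
        rw [div_pow, ← Real.rpow_natCast (t⁻¹ ^ (ε/2)) 2, ← Real.rpow_mul (by positivity)]
        rw [Real.inv_rpow h1.le, ← Real.rpow_neg h1.le]
        norm_num
        ring_nf
      rw [e1, neg_sq]
      calc (Real.log t⁻¹)^2 ≤ (t⁻¹ ^ (ε/2) / (ε/2))^2 := e4
        _ = (2/ε)^2 * t ^ (-ε) := e5
    calc t ^ (2*r₀) * (Real.log t)^2 ≤ t ^ (2*r₀) * ((2/ε)^2 * t ^ (-ε)) := by
          exact mul_le_mul_of_nonneg_left hlog (Real.rpow_nonneg h1.le _)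
      _ = (2/ε)^2 * (t ^ (2*r₀) * t ^ (-ε)) := by ring
      _ = (2/ε)^2 * t ^ (2*r₀ - ε) := by rw [← Real.rpow_add h1, sub_eq_add_neg]
  · rw [gfun, if_neg h]
    have h0 : ‖(0:ℂ)‖ ^ 2 = 0 := by simp
    rw [h0]
    positivity

lemma gfun_sq_ge (n : ℕ) (r₀ : ℝ) {ρ : ℝ} (hρ1 : 0 < ρ) (hρ2 : ρ ≤ 1/2)
    {ξ : EuclideanSpace ℝ (Fin n)} (h1 : ρ/2 < ‖ξ‖) (h2 : ‖ξ‖ ≤ ρ) :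
    min 1 ((2:ℝ)^(-(2*r₀))) * ρ^(2*r₀) * (Real.log ρ)^2 ≤ ‖gfun n r₀ ξ‖ ^ 2 := by
  have ht0 : 0 < ‖ξ‖ := lt_trans (by positivity) h1
  have ht2 : ‖ξ‖ ≤ 1/2 := h2.trans hρ2
  rw [gfun_sq ht0 ht2]
  have hpow : min 1 ((2:ℝ)^(-(2*r₀))) * ρ^(2*r₀) ≤ ‖ξ‖ ^ (2*r₀) := by
    rcases le_or_gt 0 (2*r₀) with hc | hc
    · calc min 1 ((2:ℝ)^(-(2*r₀))) * ρ^(2*r₀) ≤ (2:ℝ)^(-(2*r₀)) * ρ^(2*r₀) := by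
            exact mul_le_mul_of_nonneg_right (min_le_right _ _) (Real.rpow_nonneg hρ1.le _)
        _ = (ρ/2) ^ (2*r₀) := by
            rw [div_eq_mul_inv, Real.mul_rpow hρ1.le (by norm_num),
              Real.inv_rpow (by norm_num : (0:ℝ) ≤ 2), ← Real.rpow_neg (by norm_num : (0:ℝ) ≤ 2)]
            ring
        _ ≤ ‖ξ‖ ^ (2*r₀) := Real.rpow_le_rpow (by positivity) h1.le hc
    · calc min 1 ((2:ℝ)^(-(2*r₀))) * ρ^(2*r₀) ≤ 1 * ρ^(2*r₀) := by
            exact mul_le_mul_of_nonneg_right (min_le_left _ _) (Real.rpow_nonneg hρ1.le _)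
        _ = ρ^(2*r₀) := one_mul _
        _ ≤ ‖ξ‖ ^ (2*r₀) := Real.rpow_le_rpow_of_nonpos ht0 h2 hc.le
  have hlog : (Real.log ρ)^2 ≤ (Real.log ‖ξ‖)^2 := by
    have l1 : Real.log ‖ξ‖ ≤ Real.log ρ := Real.log_le_log ht0 h2
    have l2 : Real.log ρ ≤ 0 := Real.log_nonpos hρ1.le (by linarith)
    nlinarith
  have h1' : 0 ≤ min 1 ((2:ℝ)^(-(2*r₀))) * ρ^(2*r₀) := by positivity
  nlinarith [Real.rpow_nonneg ht0.le (2*r₀), sq_nonneg (Real.log ρ), sq_nonneg (Real.log ‖ξ‖)]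

lemma decay_set (n : ℕ) (ρ : ℝ) :
    {ξ : EuclideanSpace ℝ (Fin n) | ‖ξ‖ ≤ ρ} = closedBall 0 ρ := by
  ext ξ; simp [mem_closedBall_zero_iff]

lemma decayFun_eq (n : ℕ) (g : EuclideanSpace ℝ (Fin n) → ℂ) (r ρ : ℝ) :
    decayFun n g r ρ = ENNReal.ofReal (ρ ^ (-(2 * r + (n : ℝ)))) *
      ∫⁻ ξ in closedBall (0 : EuclideanSpace ℝ (Fin n)) ρ, ENNReal.ofReal (‖g ξ‖ ^ 2) := by
  rw [decayFun, decay_set]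

lemma decay_mono (n : ℕ) (g : EuclideanSpace ℝ (Fin n) → ℂ) {r r' ρ : ℝ}
    (h0 : 0 < ρ) (h1 : ρ ≤ 1) (hr : r ≤ r') :
    decayFun n g r ρ ≤ decayFun n g r' ρ :=
  mul_le_mul_left (ENNReal.ofReal_le_ofReal
    (Real.rpow_le_rpow_of_exponent_ge h0 h1 (by linarith))) _

lemma Pplus_mono (n : ℕ) (g : EuclideanSpace ℝ (Fin n) → ℂ) {r r' : ℝ} (hr : r ≤ r') :
    Pplus n g r ≤ Pplus n g r' := by
  have hev : (fun ρ : ℝ => decayFun n g r ρ) ≤ᶠ[𝓝[>] (0:ℝ)] fun ρ => decayFun n g r' ρ := by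
    filter_upwards [Ioc_mem_nhdsGT_of_mem (Set.mem_Ico.mpr ⟨le_refl (0:ℝ), one_pos⟩)] with ρ hρ
    exact decay_mono n g hρ.1 hρ.2 hr
  exact limsup_le_limsup hev

lemma Pminus_mono (n : ℕ) (g : EuclideanSpace ℝ (Fin n) → ℂ) {r r' : ℝ} (hr : r ≤ r') :
    Pminus n g r ≤ Pminus n g r' := by
  have hev : (fun ρ : ℝ => decayFun n g r ρ) ≤ᶠ[𝓝[>] (0:ℝ)] fun ρ => decayFun n g r' ρ := by
    filter_upwards [Ioc_mem_nhdsGT_of_mem (Set.mem_Ico.mpr ⟨le_refl (0:ℝ), one_pos⟩)] with ρ hρ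
    exact decay_mono n g hρ.1 hρ.2 hr
  exact liminf_le_liminf hev

lemma lint_g_le (n : ℕ) (hn : 1 ≤ n) (r₀ : ℝ) {ε : ℝ} (hε : 0 < ε)
    (hbe : -(n:ℝ) < 2*r₀ - ε) :
    ∃ C : ℝ≥0∞, C ≠ ⊤ ∧ ∀ ρ : ℝ, 0 < ρ →
      ∫⁻ ξ in closedBall (0 : EuclideanSpace ℝ (Fin n)) ρ, ENNReal.ofReal (‖gfun n r₀ ξ‖ ^ 2) ≤
        C * ENNReal.ofReal (ρ ^ (2*r₀ - ε + n)) := by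
  obtain ⟨C0, hC0, hC⟩ := lint_rpow_le n hn (2*r₀ - ε) hbe
  refine ⟨ENNReal.ofReal ((2/ε)^2) * C0, ENNReal.mul_ne_top ENNReal.ofReal_ne_top hC0, ?_⟩
  intro ρ hρ
  calc ∫⁻ ξ in closedBall (0 : EuclideanSpace ℝ (Fin n)) ρ, ENNReal.ofReal (‖gfun n r₀ ξ‖ ^ 2)
      ≤ ∫⁻ ξ in closedBall (0 : EuclideanSpace ℝ (Fin n)) ρ,
          ENNReal.ofReal ((2/ε)^2) * ENNReal.ofReal (‖ξ‖ ^ (2*r₀ - ε)) :=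
        lintegral_mono (fun ξ => gfun_sq_le n r₀ hε ξ)
    _ = ENNReal.ofReal ((2/ε)^2) *
          ∫⁻ ξ in closedBall (0 : EuclideanSpace ℝ (Fin n)) ρ, ENNReal.ofReal (‖ξ‖ ^ (2*r₀ - ε)) :=
        lintegral_const_mul' _ _ ENNReal.ofReal_ne_top
    _ ≤ ENNReal.ofReal ((2/ε)^2) * (C0 * ENNReal.ofReal (ρ ^ (2*r₀ - ε + n))) :=
        mul_le_mul_right (hC ρ hρ) _
    _ = ENNReal.ofReal ((2/ε)^2) * C0 * ENNReal.ofReal (ρ ^ (2*r₀ - ε + n)) := by ring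

lemma decay_upper_s18 (n : ℕ) (hn : 1 ≤ n) (r₀ : ℝ) {r : ℝ} (h1 : -r₀ - (n:ℝ) < r) (h2 : r < r₀) :
    ∃ C : ℝ≥0∞, C ≠ ⊤ ∧ ∀ ρ : ℝ, 0 < ρ →
      decayFun n (gfun n r₀) r ρ ≤ C * ENNReal.ofReal (ρ ^ (r₀ - r)) := by
  have hε : 0 < r₀ - r := by linarith
  have hbe : -(n:ℝ) < 2*r₀ - (r₀ - r) := by linarith
  obtain ⟨C, hC, hCle⟩ := lint_g_le n hn r₀ hε hbe
  refine ⟨C, hC, fun ρ hρ => ?_⟩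
  rw [decayFun_eq]
  calc ENNReal.ofReal (ρ ^ (-(2 * r + (n : ℝ)))) *
        ∫⁻ ξ in closedBall (0 : EuclideanSpace ℝ (Fin n)) ρ, ENNReal.ofReal (‖gfun n r₀ ξ‖ ^ 2)
      ≤ ENNReal.ofReal (ρ ^ (-(2 * r + (n : ℝ)))) *
        (C * ENNReal.ofReal (ρ ^ (2*r₀ - (r₀ - r) + n))) := mul_le_mul_right (hCle ρ hρ) _
    _ = C * (ENNReal.ofReal (ρ ^ (-(2 * r + (n : ℝ)))) *
        ENNReal.ofReal (ρ ^ (2*r₀ - (r₀ - r) + n))) := by ring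
    _ = C * ENNReal.ofReal (ρ ^ (r₀ - r)) := by
        rw [← ENNReal.ofReal_mul (Real.rpow_nonneg hρ.le _), ← Real.rpow_add hρ]
        ring_nf

lemma Pplus_zero_near (n : ℕ) (hn : 1 ≤ n) (r₀ : ℝ) {r : ℝ}
    (h1 : -r₀ - (n:ℝ) < r) (h2 : r < r₀) :
    Pplus n (gfun n r₀) r = 0 := by
  obtain ⟨C, hC, hCle⟩ := decay_upper_s18 n hn r₀ h1 h2
  have hδ : 0 < r₀ - r := by linarith
  have htend : Tendsto (fun ρ : ℝ => C * ENNReal.ofReal (ρ ^ (r₀ - r))) (𝓝[>] (0:ℝ)) (𝓝 0) := by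
    have hr : Tendsto (fun ρ : ℝ => ρ ^ (r₀ - r)) (𝓝[>] (0:ℝ)) (𝓝 0) := by
      have h0 : Tendsto (fun ρ : ℝ => ρ ^ (r₀ - r)) (𝓝 (0:ℝ)) (𝓝 ((0:ℝ) ^ (r₀ - r))) :=
        (Real.continuousAt_rpow_const 0 (r₀ - r) (Or.inr hδ.le)).tendsto
      rw [Real.zero_rpow hδ.ne'] at h0
      exact h0.mono_left nhdsWithin_le_nhds
    have h0 : Tendsto (fun ρ : ℝ => ENNReal.ofReal (ρ ^ (r₀ - r))) (𝓝[>] (0:ℝ)) (𝓝 0) := by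
      have := (ENNReal.continuous_ofReal.tendsto 0).comp hr
      simpa [Function.comp_def] using this
    have := ENNReal.Tendsto.const_mul h0 (Or.inr hC)
    simpa using this
  apply le_antisymm _ zero_le
  have hev : (fun ρ : ℝ => decayFun n (gfun n r₀) r ρ) ≤ᶠ[𝓝[>] (0:ℝ)]
      fun ρ : ℝ => C * ENNReal.ofReal (ρ ^ (r₀ - r)) := by
    filter_upwards [self_mem_nhdsWithin] with ρ hρ
    exact hCle ρ hρ
  calc Pplus n (gfun n r₀) r
      ≤ limsup (fun ρ : ℝ => C * ENNReal.ofReal (ρ ^ (r₀ - r))) (𝓝[>] (0:ℝ)) :=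
        limsup_le_limsup hev
    _ = 0 := htend.limsup_eq

lemma Pplus_zero (n : ℕ) (hn : 1 ≤ n) (r₀ : ℝ) (hlow : -(n : ℝ) / 2 < r₀) {r : ℝ} (h2 : r < r₀) :
    Pplus n (gfun n r₀) r = 0 := by
  have key : Pplus n (gfun n r₀) (max r (-(n:ℝ)/2)) = 0 := by
    apply Pplus_zero_near n hn r₀
    · have : -r₀ - (n:ℝ) < -(n:ℝ)/2 := by linarith
      exact lt_of_lt_of_le this (le_max_right _ _)
    · exact max_lt h2 hlow
  exact le_antisymm (le_trans (Pplus_mono n _ (le_max_left _ _)) key.le) zero_le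

lemma Pminus_zero (n : ℕ) (hn : 1 ≤ n) (r₀ : ℝ) (hlow : -(n : ℝ) / 2 < r₀) {r : ℝ} (h2 : r < r₀) :
    Pminus n (gfun n r₀) r = 0 := by
  apply le_antisymm _ zero_le
  rw [← Pplus_zero n hn r₀ hlow h2]
  exact liminf_le_limsup

lemma decay_lower_s18 (n : ℕ) (hn : 1 ≤ n) (r₀ : ℝ) :
    ∃ c : ℝ, 0 < c ∧ ∀ ρ : ℝ, ρ ∈ Set.Ioc (0:ℝ) (1/2) →
      ENNReal.ofReal (c * (Real.log ρ)^2) * volume (ball (0 : EuclideanSpace ℝ (Fin n)) 1) ≤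
        decayFun n (gfun n r₀) r₀ ρ := by
  haveI : Nonempty (Fin n) := ⟨⟨0, hn⟩⟩
  set E := EuclideanSpace ℝ (Fin n)
  set B : ℝ≥0∞ := volume (ball (0:E) 1) with hB
  have hBne : B ≠ ⊤ := measure_ball_lt_top.ne
  have h2n : (0:ℝ) < 1 - (2:ℝ)⁻¹ ^ n := by
    have : (2:ℝ)⁻¹ ^ n < 1 := pow_lt_one₀ (by norm_num) (by norm_num) (by omega)
    linarith
  refine ⟨min 1 ((2:ℝ)^(-(2*r₀))) * (1 - (2:ℝ)⁻¹ ^ n), by positivity, ?_⟩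
  rintro ρ ⟨hρ0, hρ2⟩
  set m : ℝ := min 1 ((2:ℝ)^(-(2*r₀))) * ρ^(2*r₀) * (Real.log ρ)^2 with hm
  have hm0 : 0 ≤ m := by positivity
  set S : Set E := closedBall 0 ρ \ closedBall 0 (ρ/2) with hS
  have hmono : ∀ ξ ∈ S, ENNReal.ofReal m ≤ ENNReal.ofReal (‖gfun n r₀ ξ‖ ^ 2) := by
    rintro ξ ⟨hξ1, hξ2⟩
    rw [mem_closedBall_zero_iff] at hξ1
    have hξ2' : ρ/2 < ‖ξ‖ := by
      by_contra hc
      exact hξ2 (mem_closedBall_zero_iff.mpr (not_lt.mp hc))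
    exact ENNReal.ofReal_le_ofReal (gfun_sq_ge n r₀ hρ0 hρ2 hξ2' hξ1)
  have hmeas : Measurable (fun ξ : E => ENNReal.ofReal (‖gfun n r₀ ξ‖ ^ 2)) :=
    (((gfun_measurable n r₀).norm).pow_const 2).ennreal_ofReal
  have hSvol : volume S = ENNReal.ofReal (ρ^n - (ρ/2)^n) * B := by
    rw [hS, measure_diff (closedBall_subset_closedBall (by linarith))
      measurableSet_closedBall.nullMeasurableSet measure_closedBall_lt_top.ne,
      Measure.addHaar_closedBall _ _ hρ0.le, Measure.addHaar_closedBall _ _ (by positivity : (0:ℝ) ≤ ρ/2),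
      finrank_euclideanSpace_fin, ← ENNReal.sub_mul (fun _ _ => hBne),
      ← ENNReal.ofReal_sub _ (by positivity : (0:ℝ) ≤ (ρ/2)^n)]
  have step1 : ENNReal.ofReal m * volume S ≤
      ∫⁻ ξ in closedBall (0:E) ρ, ENNReal.ofReal (‖gfun n r₀ ξ‖ ^ 2) := by
    calc ENNReal.ofReal m * volume S = ∫⁻ _ in S, ENNReal.ofReal m := (setLIntegral_const _ _).symm
      _ ≤ ∫⁻ ξ in S, ENNReal.ofReal (‖gfun n r₀ ξ‖ ^ 2) := setLIntegral_mono hmeas hmono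
      _ ≤ ∫⁻ ξ in closedBall (0:E) ρ, ENNReal.ofReal (‖gfun n r₀ ξ‖ ^ 2) :=
        lintegral_mono_set Set.diff_subset
  rw [decayFun_eq]
  have hone : ρ ^ (-(2*r₀+(n:ℝ))) * ρ ^ (2*r₀) * (ρ:ℝ)^(n:ℕ) = 1 := by
    rw [← Real.rpow_natCast ρ n, ← Real.rpow_add hρ0, ← Real.rpow_add hρ0]
    norm_num
  have hdiv : (ρ/2)^n = ρ^n * ((2:ℝ)⁻¹)^n := by rw [div_eq_mul_inv, mul_pow]
  have hre : min 1 ((2:ℝ)^(-(2*r₀))) * (1 - (2:ℝ)⁻¹ ^ n) * (Real.log ρ)^2 =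
      ρ ^ (-(2 * r₀ + (n : ℝ))) * (m * (ρ^n - (ρ/2)^n)) := by
    rw [hm, hdiv]
    linear_combination (min 1 ((2:ℝ)^(-(2*r₀))) * (Real.log ρ)^2 * ((2:ℝ)⁻¹^n - 1)) * hone
  calc ENNReal.ofReal (min 1 ((2:ℝ)^(-(2*r₀))) * (1 - (2:ℝ)⁻¹ ^ n) * (Real.log ρ)^2) * B
      = ENNReal.ofReal (ρ ^ (-(2 * r₀ + (n : ℝ))) * (m * (ρ^n - (ρ/2)^n))) * B := by
        rw [hre]
    _ = ENNReal.ofReal (ρ ^ (-(2 * r₀ + (n : ℝ)))) * (ENNReal.ofReal m *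
          (ENNReal.ofReal (ρ^n - (ρ/2)^n) * B)) := by
        rw [ENNReal.ofReal_mul (Real.rpow_nonneg hρ0.le _), ENNReal.ofReal_mul hm0,
          mul_assoc, mul_assoc]
    _ ≤ ENNReal.ofReal (ρ ^ (-(2 * r₀ + (n : ℝ)))) *
          ∫⁻ ξ in closedBall (0:E) ρ, ENNReal.ofReal (‖gfun n r₀ ξ‖ ^ 2) := by
        apply mul_le_mul_right
        rw [← hSvol]
        exact step1

lemma Pminus_top (n : ℕ) (hn : 1 ≤ n) (r₀ : ℝ) : Pminus n (gfun n r₀) r₀ = ⊤ := by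
  haveI : Nonempty (Fin n) := ⟨⟨0, hn⟩⟩
  obtain ⟨c, hc, hle⟩ := decay_lower_s18 n hn r₀
  set B : ℝ≥0∞ := volume (ball (0 : EuclideanSpace ℝ (Fin n)) 1) with hB
  have hB0 : B ≠ 0 := (measure_ball_pos volume 0 one_pos).ne'
  have h1 : Tendsto (fun ρ : ℝ => c * (Real.log ρ)^2) (𝓝[>] (0:ℝ)) atTop := by
    apply Tendsto.const_mul_atTop hc
    have hneg : Tendsto (fun x : ℝ => -x) atBot atTop := tendsto_neg_atBot_atTop
    have hpow : Tendsto (fun x : ℝ => x ^ (2:ℕ)) atTop atTop :=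
      tendsto_pow_atTop (two_ne_zero)
    have hsq : Tendsto (fun x : ℝ => (-x)^(2:ℕ)) atBot atTop := hpow.comp hneg
    have hcomp : Tendsto (fun ρ : ℝ => (-(Real.log ρ))^(2:ℕ)) (𝓝[>] (0:ℝ)) atTop :=
      hsq.comp Real.tendsto_log_nhdsGT_zero
    apply hcomp.congr
    intro ρ
    ring
  have h2 : Tendsto (fun ρ : ℝ => ENNReal.ofReal (c * (Real.log ρ)^2) * B) (𝓝[>] (0:ℝ)) (𝓝 ⊤) := by
    have h3 : Tendsto (fun ρ : ℝ => ENNReal.ofReal (c * (Real.log ρ)^2)) (𝓝[>] (0:ℝ)) (𝓝 ⊤) :=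
      ENNReal.tendsto_ofReal_atTop.comp h1
    have h4 := ENNReal.Tendsto.mul_const (b := B) h3 (Or.inl ENNReal.top_ne_zero)
    rwa [ENNReal.top_mul hB0] at h4
  apply top_le_iff.mp
  calc (⊤:ℝ≥0∞) = liminf (fun ρ : ℝ => ENNReal.ofReal (c * (Real.log ρ)^2) * B) (𝓝[>] (0:ℝ)) :=
        h2.liminf_eq.symm
    _ ≤ Pminus n (gfun n r₀) r₀ := by
        have hev : (fun ρ : ℝ => ENNReal.ofReal (c * (Real.log ρ)^2) * B) ≤ᶠ[𝓝[>] (0:ℝ)]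
            fun ρ : ℝ => decayFun n (gfun n r₀) r₀ ρ := by
          filter_upwards [Ioc_mem_nhdsGT_of_mem
            (show (0:ℝ) ∈ Set.Ico (0:ℝ) (1/2) by constructor <;> norm_num)] with ρ hρ
          exact hle ρ hρ
        exact liminf_le_liminf hev

lemma Pplus_top (n : ℕ) (hn : 1 ≤ n) (r₀ : ℝ) {r : ℝ} (hr : r₀ ≤ r) :
    Pplus n (gfun n r₀) r = ⊤ := by
  apply top_le_iff.mp
  calc (⊤:ℝ≥0∞) = Pminus n (gfun n r₀) r₀ := (Pminus_top n hn r₀).symm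
    _ ≤ Pplus n (gfun n r₀) r₀ := liminf_le_limsup
    _ ≤ Pplus n (gfun n r₀) r := Pplus_mono n _ hr

lemma Pminus_top' (n : ℕ) (hn : 1 ≤ n) (r₀ : ℝ) {r : ℝ} (hr : r₀ ≤ r) :
    Pminus n (gfun n r₀) r = ⊤ := by
  apply top_le_iff.mp
  calc (⊤:ℝ≥0∞) = Pminus n (gfun n r₀) r₀ := (Pminus_top n hn r₀).symm
    _ ≤ Pminus n (gfun n r₀) r := Pminus_mono n _ hr

lemma gfun_memLp (n : ℕ) (hn : 1 ≤ n) (r₀ : ℝ) (hlow : -(n : ℝ) / 2 < r₀) :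
    MemLp (gfun n r₀) 2 (volume : Measure (EuclideanSpace ℝ (Fin n))) := by
  refine ⟨(gfun_measurable n r₀).aestronglyMeasurable, ?_⟩
  have hε : 0 < r₀ + (n:ℝ)/2 := by linarith
  have hbe : -(n:ℝ) < 2*r₀ - (r₀ + (n:ℝ)/2) := by linarith
  obtain ⟨C, hC, hCle⟩ := lint_g_le n hn r₀ hε hbe
  have hfin : ∫⁻ ξ, ENNReal.ofReal (‖gfun n r₀ ξ‖ ^ 2) < ⊤ := by
    rw [← lintegral_add_compl (fun ξ => ENNReal.ofReal (‖gfun n r₀ ξ‖ ^ 2))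
      (measurableSet_closedBall : MeasurableSet (closedBall (0 : EuclideanSpace ℝ (Fin n)) (1/2)))]
    have hzero : ∀ ξ ∈ (closedBall (0 : EuclideanSpace ℝ (Fin n)) (1/2))ᶜ,
        ENNReal.ofReal (‖gfun n r₀ ξ‖ ^ 2) = (0:ℝ≥0∞) := by
      intro ξ hξ
      have hno : ¬ (‖ξ‖ ≤ 1/2) := by simpa [mem_closedBall_zero_iff] using hξ
      rw [gfun, if_neg (fun hcon => hno hcon.2)]
      simp
    have hcompl : ∫⁻ ξ in (closedBall (0 : EuclideanSpace ℝ (Fin n)) (1/2))ᶜ,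
        ENNReal.ofReal (‖gfun n r₀ ξ‖ ^ 2) = 0 := by
      rw [setLIntegral_congr_fun measurableSet_closedBall.compl hzero,
        lintegral_zero]
    rw [hcompl, add_zero]
    calc ∫⁻ ξ in closedBall (0 : EuclideanSpace ℝ (Fin n)) (1/2),
          ENNReal.ofReal (‖gfun n r₀ ξ‖ ^ 2)
        ≤ C * ENNReal.ofReal ((1/2:ℝ) ^ (2*r₀ - (r₀ + (n:ℝ)/2) + n)) := hCle (1/2) (by norm_num)
      _ < ⊤ := ENNReal.mul_lt_top hC.lt_top ENNReal.ofReal_lt_top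
  rw [eLpNorm_eq_lintegral_rpow_enorm_toReal two_ne_zero ENNReal.ofNat_ne_top]
  have htr : ((2:ℝ≥0∞).toReal) = (2:ℝ) := by norm_num
  rw [htr]
  apply ENNReal.rpow_lt_top_of_nonneg (by norm_num)
  have hpt : ∀ x : EuclideanSpace ℝ (Fin n),
      ‖gfun n r₀ x‖ₑ ^ (2:ℝ) = ENNReal.ofReal (‖gfun n r₀ x‖ ^ 2) := by
    intro x
    rw [← ofReal_norm,
      ENNReal.ofReal_rpow_of_nonneg (norm_nonneg _) (by norm_num : (0:ℝ) ≤ 2)]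
    congr 1
    rw [show (2:ℝ) = ((2:ℕ):ℝ) by norm_num, Real.rpow_natCast]
  rw [lintegral_congr hpt]
  exact hfin.ne

theorem stmt18 (n : ℕ) (hn : 1 ≤ n) (r₀ : ℝ) (hlow : -(n : ℝ) / 2 < r₀) :
    ∃ g : EuclideanSpace ℝ (Fin n) → ℂ, Measurable g ∧
      MemLp g 2 (volume : Measure (EuclideanSpace ℝ (Fin n))) ∧
      rPlus n g = (r₀ : EReal) ∧ rMinus n g = (r₀ : EReal) ∧
      Pminus n g r₀ = ⊤ ∧ Pplus n g r₀ = ⊤ ∧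
      ¬ ∃ r : ℝ, 0 < Pminus n g r ∧ Pplus n g r < ⊤ := by
  refine ⟨gfun n r₀, gfun_measurable n r₀, gfun_memLp n hn r₀ hlow, ?_, ?_,
    Pminus_top n hn r₀, Pplus_top n hn r₀ le_rfl, ?_⟩
  · rw [rPlus]
    apply le_antisymm
    · apply sSup_le
      rintro x ⟨r, rfl, hr⟩
      by_contra hc
      push_neg at hc
      have hge : r₀ ≤ r := by exact_mod_cast hc.le
      rw [Pplus_top n hn r₀ hge] at hr
      exact lt_irrefl ⊤ hr
    · apply le_of_forall_lt
      intro c hc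
      obtain ⟨x, hx1, hx2⟩ := EReal.exists_between_coe_real hc
      have hxlt : x < r₀ := by exact_mod_cast hx2
      have hmem : (x:EReal) ∈ {y : EReal | ∃ r : ℝ, y = (r : EReal) ∧ Pplus n (gfun n r₀) r < ⊤} := by
        refine ⟨x, rfl, ?_⟩
        rw [Pplus_zero n hn r₀ hlow hxlt]
        exact ENNReal.zero_lt_top
      exact lt_of_lt_of_le hx1 (le_sSup hmem)
  · rw [rMinus]
    apply le_antisymm
    · apply sInf_le
      refine ⟨r₀, rfl, ?_⟩
      rw [Pminus_top n hn r₀]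
      exact ENNReal.zero_lt_top
    · apply le_sInf
      rintro x ⟨r, rfl, hr⟩
      by_contra hc
      push_neg at hc
      have hrr : r < r₀ := by exact_mod_cast hc
      rw [Pminus_zero n hn r₀ hlow hrr] at hr
      exact lt_irrefl 0 hr
  · rintro ⟨r, h1, h2⟩
    rcases lt_or_ge r r₀ with h | h
    · rw [Pminus_zero n hn r₀ hlow h] at h1
      exact lt_irrefl 0 h1
    · rw [Pplus_top n hn r₀ h] at h2
      exact lt_irrefl ⊤ h2
end
end
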